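/- arXiv:1612.01435 — 4 statements merged into one kernel-verified Lean document; each statement's English description precedes it below -/
import Mathlib

section
/- The shift graph has no finite Borel coloring: for every n∈ω and every Borel map c:[ω]^ω→{0,…,n-1}, there exists X∈[ω]^ω with c(X)=c(S(X)). -/
/-- The space `[ω]^ω` of infinite subsets of `ω`, identified with their strictly
increasing enumerations, as a subspace of the Baire space `ℕ → ℕ`. -/
abbrev InfSub := {g : ℕ → ℕ // StrictMono g}

/-- The shift `S(X) = X ∖ {min X}`. -/
def shiftS (X : InfSub) : InfSub :=
  ⟨fun n => X.1 (n + 1), fun _ _ h => X.2 (Nat.succ_lt_succ h)⟩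

/-- Edge relation of the directed shift graph `D_S`. -/
def shiftEdge (X Y : InfSub) : Prop := X ≠ Y ∧ shiftS X = Y

/-- Edge relation of the symmetric shift graph `G_S`. -/
def shiftAdj (X Y : InfSub) : Prop := X ≠ Y ∧ (shiftS X = Y ∨ shiftS Y = X)

/-- `Unf(P)`: the set of `X` whose consecutive elements are `P`-related. -/
def UnfRel (P : ℕ → ℕ → Prop) : Set InfSub :=
  {X | ∀ i, P (X.1 i) (X.1 (i + 1))}

namespace GP

/-- The Mathias-style cube `[k, W]`: all `X` agreeing with `W` on the first `k`
coordinates, with all values taken from the range of `W`. -/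
def Cube (k : ℕ) (W : InfSub) : Set InfSub :=
  {X | (∀ i < k, X.1 i = W.1 i) ∧ ∀ i, X.1 i ∈ Set.range W.1}

lemma self_mem_cube (k : ℕ) (W : InfSub) : W ∈ Cube k W :=
  ⟨fun _ _ => rfl, fun i => ⟨i, rfl⟩⟩

lemma cube_antitone {k k' : ℕ} (h : k ≤ k') (W : InfSub) : Cube k' W ⊆ Cube k W :=
  fun _ hX => ⟨fun i hi => hX.1 i (lt_of_lt_of_le hi h), hX.2⟩

lemma range_subset_of_mem_cube {k : ℕ} {W X : InfSub} (h : X ∈ Cube k W) :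
    Set.range X.1 ⊆ Set.range W.1 := by
  rintro x ⟨i, rfl⟩; exact h.2 i

lemma cube_trans {k : ℕ} {W V X : InfSub} (hX : X ∈ Cube k V) (hV : V ∈ Cube k W) :
    X ∈ Cube k W :=
  ⟨fun i hi => (hX.1 i hi).trans (hV.1 i hi), fun i => range_subset_of_mem_cube hV (hX.2 i)⟩

lemma cube_subset {k : ℕ} {W V : InfSub} (hV : V ∈ Cube k W) : Cube k V ⊆ Cube k W :=
  fun _ hX => cube_trans hX hV

lemma le_of_mem_cube {k : ℕ} {W X : InfSub} (h : X ∈ Cube k W) : ∀ i, W.1 i ≤ X.1 i := by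
  intro i
  induction i with
  | zero =>
    obtain ⟨j, hj⟩ := h.2 0
    exact hj ▸ W.2.monotone (Nat.zero_le j)
  | succ i ih =>
    obtain ⟨j, hj⟩ := h.2 (i + 1)
    have h1 : W.1 i < W.1 j := lt_of_le_of_lt ih (hj ▸ X.2 (Nat.lt_succ_self i))
    have : i < j := by
      by_contra hc
      exact absurd (W.2.monotone (Nat.le_of_not_lt hc)) (not_le.mpr h1)
    exact hj ▸ W.2.monotone this

/-- Values of a cube member at positions `≥ B` occur in `W` at positions `≥ B`. -/
lemma mem_cube_ge {B : ℕ} {W X : InfSub} (h : X ∈ Cube B W) {i : ℕ} (hi : B ≤ i) :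
    ∃ r, B ≤ r ∧ W.1 r = X.1 i := by
  obtain ⟨r, hr⟩ := h.2 i
  refine ⟨r, ?_, hr⟩
  by_contra hc
  have h1 : W.1 r < W.1 B := W.2 (Nat.lt_of_not_le hc)
  have h2 : W.1 B ≤ X.1 B := le_of_mem_cube h B
  have h3 : X.1 B ≤ X.1 i := X.2.monotone hi
  omega

lemma shiftS_mem_cube (X : InfSub) : shiftS X ∈ Cube 0 X :=
  ⟨fun i hi => absurd hi (Nat.not_lt_zero i), fun i => ⟨i + 1, rfl⟩⟩


/-! ### Stems -/

/-- A stem is a strictly increasing list of indices `< B`; `sel s B` is the strictly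
monotone reindexing: first the stem's indices, then everything from `B` on. -/
def sel (s : List ℕ) (B : ℕ) : ℕ → ℕ :=
  fun i => if h : i < s.length then s.get ⟨i, h⟩ else i - s.length + B

/-- A valid stem for block size `B`. -/
def StemOK (B : ℕ) (s : List ℕ) : Prop :=
  List.Chain' (· < ·) s ∧ ∀ x ∈ s, x < B

lemma sel_strictMono {B : ℕ} {s : List ℕ} (hs : StemOK B s) : StrictMono (sel s B) := by
  apply strictMono_nat_of_lt_succ
  intro i
  unfold sel
  rcases lt_trichotomy (i + 1) s.length with h | h | h
  · have hi : i < s.length := by omega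
    rw [dif_pos hi, dif_pos h]
    exact List.isChain_iff_getElem.mp hs.1 i (by omega)
  · have hi : i < s.length := by omega
    rw [dif_pos hi, dif_neg (by omega)]
    have := hs.2 (s.get ⟨i, hi⟩) (s.get_mem _)
    omega
  · rw [dif_neg (by omega), dif_neg (by omega)]
    omega

lemma sel_lt {B : ℕ} {s : List ℕ} {i : ℕ} (h : i < s.length) :
    sel s B i = s.get ⟨i, h⟩ := dif_pos h

lemma sel_ge {B : ℕ} {s : List ℕ} {i : ℕ} (h : s.length ≤ i) :
    sel s B i = i - s.length + B := dif_neg (by omega)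

/-- The condition with stem `s` (indices into `Y`) and tail `Y` from `B` on. -/
def compSel (Y : InfSub) (s : List ℕ) (B : ℕ) (hs : StemOK B s) : InfSub :=
  ⟨Y.1 ∘ sel s B, Y.2.comp (sel_strictMono hs)⟩

lemma compSel_apply_lt {Y : InfSub} {s : List ℕ} {B : ℕ} (hs : StemOK B s) {i : ℕ}
    (h : i < s.length) : (compSel Y s B hs).1 i = Y.1 (s.get ⟨i, h⟩) := by
  simp [compSel, sel_lt h]

lemma compSel_apply_ge {Y : InfSub} {s : List ℕ} {B : ℕ} (hs : StemOK B s) {i : ℕ}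
    (h : s.length ≤ i) : (compSel Y s B hs).1 i = Y.1 (i - s.length + B) := by
  simp [compSel, sel_ge h]

lemma range_compSel_subset {Y : InfSub} {s : List ℕ} {B : ℕ} (hs : StemOK B s) :
    Set.range (compSel Y s B hs).1 ⊆ Set.range Y.1 := by
  rintro x ⟨i, rfl⟩; exact ⟨sel s B i, rfl⟩

/-- Key transport lemma: if `Y'` refines `Y` inside `[B, Y]`, and `B ≤ B'`, then the
condition `compSel Y' s B'` refines `compSel Y s B` inside the stem-length cube. -/
lemma compSel_mem_cube {Y Y' : InfSub} {s : List ℕ} {B B' : ℕ} (hs : StemOK B s)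
    (hs' : StemOK B' s) (hBB' : B ≤ B') (hY' : Y' ∈ Cube B Y) :
    compSel Y' s B' hs' ∈ Cube s.length (compSel Y s B hs) := by
  constructor
  · intro i hi
    rw [compSel_apply_lt hs' hi, compSel_apply_lt hs hi]
    exact hY'.1 _ (hs.2 _ (s.get_mem _))
  · intro i
    rcases lt_or_ge i s.length with h | h
    · rw [compSel_apply_lt hs' h]
      refine ⟨i, ?_⟩
      rw [compSel_apply_lt hs h]
      exact (hY'.1 _ (hs.2 _ (s.get_mem _))).symm
    · rw [compSel_apply_ge hs' h]
      obtain ⟨r, hrB, hr⟩ := mem_cube_ge hY' (show B ≤ i - s.length + B' by omega)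
      refine ⟨r - B + s.length, ?_⟩
      rw [compSel_apply_ge hs (by omega)]
      rw [show r - B + s.length - s.length + B = r by omega]
      exact hr

/-- Grafting the tail of a refinement `Z` of the condition `compSel Y s B` back onto
the block `[0, B)` of `Y`. -/
lemma graft_exists {Y Z : InfSub} {s : List ℕ} {B : ℕ} (hs : StemOK B s)
    (hZ : Z ∈ Cube s.length (compSel Y s B hs)) :
    ∃ Y' : InfSub, Y' ∈ Cube B Y ∧ compSel Y' s B hs = Z := by
  set j := s.length with hj
  have hB : ∀ i < B, Y.1 i < Z.1 j := by
    intro i hi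
    have h1 : (compSel Y s B hs).1 j ≤ Z.1 j := le_of_mem_cube hZ j
    rw [compSel_apply_ge hs (le_refl j), show j - j + B = B by omega] at h1
    exact lt_of_lt_of_le (Y.2 hi) h1
  have hmono : StrictMono (fun i => if i < B then Y.1 i else Z.1 (i - B + j)) := by
    apply strictMono_nat_of_lt_succ
    intro i
    rcases lt_trichotomy (i + 1) B with h | h | h
    · simp only [if_pos (show i < B by omega), if_pos h]
      exact Y.2 (Nat.lt_succ_self i)
    · simp only [if_pos (show i < B by omega), if_neg (show ¬ i + 1 < B by omega)]
      rw [show i + 1 - B + j = j by omega]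
      exact hB i (by omega)
    · simp only [if_neg (show ¬ i < B by omega), if_neg (show ¬ i + 1 < B by omega)]
      exact Z.2 (by omega)
  refine ⟨⟨_, hmono⟩, ⟨?_, ?_⟩, ?_⟩
  · intro i hi; simp [if_pos hi]
  · intro i
    rcases lt_or_ge i B with h | h
    · exact ⟨i, by simp [if_pos h]⟩
    · simp only [if_neg (show ¬ i < B by omega)]
      exact range_compSel_subset hs (hZ.2 (i - B + j))
  · apply Subtype.ext; funext i
    rcases lt_or_ge i j with h | h
    · rw [compSel_apply_lt hs h]
      simp only [if_pos (hs.2 _ (s.get_mem _))]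
      have := hZ.1 i h
      rw [compSel_apply_lt hs h] at this
      exact this.symm
    · rw [compSel_apply_ge hs h, ← hj]
      simp only [if_neg (show ¬ i - j + B < B by omega)]
      rw [show i - j + B - B + j = i by omega]

/-! ### The refinement engine -/

/-- Process a finite list of stems, each time shrinking the tail so that a persistent
property `P` holds of the corresponding condition. -/
lemma engine {σ : Type} (B : ℕ) (stem : σ → List ℕ) (P : σ → InfSub → Prop)
    (hP : ∀ a Z Z', P a Z → Z' ∈ Cube (stem a).length Z → P a Z')
    (hshrink : ∀ a, StemOK B (stem a) → ∀ S : InfSub, ∃ Z ∈ Cube (stem a).length S, P a Z) :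
    ∀ (L : List σ) (hL : ∀ a ∈ L, StemOK B (stem a)) (Y : InfSub),
      ∃ Y', Y' ∈ Cube B Y ∧ ∀ a (ha : a ∈ L), P a (compSel Y' (stem a) B (hL a ha)) := by
  intro L
  induction L with
  | nil => exact fun _ Y => ⟨Y, self_mem_cube B Y, fun a ha => absurd ha List.not_mem_nil⟩
  | cons a L' ih =>
    intro hL Y
    have hs : StemOK B (stem a) := hL a (List.mem_cons_self)
    obtain ⟨Z, hZ, hPZ⟩ := hshrink a hs (compSel Y (stem a) B hs)
    obtain ⟨Y₁, hY₁, heq⟩ := graft_exists hs hZ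
    obtain ⟨Y', hY', hrest⟩ := ih (fun x hx => hL x (List.mem_cons_of_mem a hx)) Y₁
    refine ⟨Y', cube_trans hY' hY₁, ?_⟩
    intro x hx
    rcases List.mem_cons.mp hx with rfl | hx'
    · have hcube : compSel Y' (stem x) B hs ∈ Cube (stem x).length Z := by
        rw [← heq]
        exact compSel_mem_cube hs hs (le_refl B) hY'
      exact hP x Z _ hPZ hcube
    · exact hrest x hx'

/-! ### Enumeration of stems over a block -/

/-- All stems over the block `[0, k+m)` whose first `k` entries are `0, …, k-1`. -/
def allStems (k : ℕ) : ℕ → List (List ℕ)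
  | 0 => [List.range k]
  | m + 1 => allStems k m ++ (allStems k m).map (fun s => s ++ [k + m])

lemma chain'_lt_ge_index {s : List ℕ} (h : List.Chain' (· < ·) s) :
    ∀ (i : ℕ) (hi : i < s.length), i ≤ s.get ⟨i, hi⟩ := by
  intro i
  induction i with
  | zero => exact fun _ => Nat.zero_le _
  | succ i ih =>
    intro hi
    have h1 : s.get ⟨i, by omega⟩ < s.get ⟨i + 1, hi⟩ := List.isChain_iff_getElem.mp h i (by omega)
    have h2 := ih (by omega)
    omega

lemma chain'_lt_le_getLast {s : List ℕ} (h : List.Chain' (· < ·) s) {x : ℕ} (hx : x ∈ s)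
    (hne : s ≠ []) : x ≤ s.getLast hne := by
  have hp : List.Pairwise (· < ·) s := List.isChain_iff_pairwise.mp h
  obtain ⟨i, hi, rfl⟩ := List.mem_iff_get.mp hx
  rw [List.getLast_eq_getElem]
  rcases Nat.lt_or_ge (i : ℕ) (s.length - 1) with h' | h'
  · exact le_of_lt (List.pairwise_iff_get.mp hp i ⟨s.length - 1, by omega⟩ (by
      simp only [Fin.lt_def]; omega))
  · have : (i : ℕ) = s.length - 1 := by have := i.2; omega
    simp [Fin.ext_iff, this]

lemma length_ge_of_take_range {k : ℕ} {s : List ℕ} (h : s.take k = List.range k) :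
    k ≤ s.length := by
  have := congrArg List.length h
  simp at this
  omega

lemma allStems_spec {k m : ℕ} {s : List ℕ} (h : s ∈ allStems k m) :
    s.take k = List.range k ∧ StemOK (k + m) s := by
  induction m generalizing s with
  | zero =>
    simp only [allStems, List.mem_singleton] at h
    subst h
    refine ⟨by simp, List.isChain_iff_pairwise.mpr List.pairwise_lt_range, fun x hx => ?_⟩
    simp only [List.mem_range] at hx
    omega
  | succ m ih =>
    simp only [allStems, List.mem_append, List.mem_map] at h
    rcases h with h | ⟨t, ht, rfl⟩
    · obtain ⟨h1, h2, h3⟩ := ih h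
      exact ⟨h1, h2, fun x hx => lt_of_lt_of_le (h3 x hx) (by omega)⟩
    · obtain ⟨h1, h2, h3⟩ := ih ht
      have hlen : k ≤ t.length := length_ge_of_take_range h1
      refine ⟨?_, ?_, ?_⟩
      · rw [List.take_append_of_le_length hlen]; exact h1
      · rw [List.Chain', List.isChain_append]
        refine ⟨h2, List.isChain_singleton _, ?_⟩
        intro x hx y hy
        simp only [List.head?_cons, Option.mem_def, Option.some.injEq] at hy
        subst hy
        exact lt_of_lt_of_le (h3 x (List.mem_of_mem_getLast? hx)) (le_refl _)
      · intro x hx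
        rcases List.mem_append.mp hx with hx | hx
        · exact lt_of_lt_of_le (h3 x hx) (by omega)
        · simp only [List.mem_singleton] at hx; omega

lemma eq_range_of_bounded {k : ℕ} {s : List ℕ} (h1 : s.take k = List.range k)
    (h2 : List.Chain' (· < ·) s) (h3 : ∀ x ∈ s, x < k) : s = List.range k := by
  have hlen : k ≤ s.length := length_ge_of_take_range h1
  have hle : s.length ≤ k := by
    by_contra hc
    have hx := chain'_lt_ge_index h2 k (by omega)
    have := h3 (s.get ⟨k, by omega⟩) (s.get_mem _)
    omega
  have : s.length = k := le_antisymm hle hlen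
  rw [← h1, List.take_of_length_le (by omega)]

lemma allStems_complete {k m : ℕ} {s : List ℕ} (h1 : s.take k = List.range k)
    (h2 : List.Chain' (· < ·) s) (h3 : ∀ x ∈ s, x < k + m) : s ∈ allStems k m := by
  induction m generalizing s with
  | zero =>
    simp only [allStems, List.mem_singleton]
    exact eq_range_of_bounded h1 h2 (by simpa using h3)
  | succ m ih =>
    simp only [allStems, List.mem_append, List.mem_map]
    by_cases hall : ∀ x ∈ s, x < k + m
    · exact Or.inl (ih h1 h2 hall)
    · push_neg at hall
      obtain ⟨x, hxs, hxge⟩ := hall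
      have hxeq : x = k + m := by have := h3 x hxs; omega
      subst hxeq
      have hne : s ≠ [] := List.ne_nil_of_mem hxs
      have hlast : s.getLast hne = k + m := by
        have hle := chain'_lt_le_getLast h2 hxs hne
        have := h3 _ (s.getLast_mem hne)
        omega
      have hlen : k ≤ s.length := length_ge_of_take_range h1
      have hlen1 : k + 1 ≤ s.length := by
        rcases Nat.lt_or_ge k s.length with h' | h'
        · omega
        · exfalso
          have hs : s = List.range k := by
            rw [← h1, List.take_of_length_le h']
          rw [hs] at hxs
          simp only [List.mem_range] at hxs
          omega
      have hpair : List.Pairwise (· < ·) s := List.isChain_iff_pairwise.mp h2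
      have hdrop : s.dropLast ++ [k + m] = s := by
        rw [← hlast]; exact List.dropLast_append_getLast hne
      refine Or.inr ⟨s.dropLast, ih ?_ ?_ ?_, hdrop⟩
      all_goals skip
      · rw [List.dropLast_eq_take, List.take_take]
        rw [show min k (s.length - 1) = k by omega]
        exact h1
      · exact List.isChain_iff_pairwise.mpr (hpair.sublist (List.dropLast_sublist s))
      · intro y hy
        obtain ⟨i, hi, rfl⟩ := List.mem_iff_get.mp hy
        have hilen : (i : ℕ) < s.length - 1 := by
          have := i.2; simp only [List.length_dropLast] at this; omega
        have hget : s.dropLast.get i = s.get ⟨i, by omega⟩ := by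
          simp [List.getElem_dropLast]
        rw [hget]
        have := List.pairwise_iff_get.mp hpair ⟨i, by omega⟩ ⟨s.length - 1, by omega⟩
          (by simp only [Fin.lt_def]; omega)
        rw [List.getLast_eq_getElem] at hlast
        simp only [List.get_eq_getElem] at this ⊢
        omega

/-! ### Fusion limits -/

lemma fusion_limit {k : ℕ} (Y : ℕ → InfSub) (h : ∀ m, Y (m + 1) ∈ Cube (k + m) (Y m)) :
    ∃ V : InfSub, ∀ m, V ∈ Cube (k + m) (Y m) := by
  have chain : ∀ m l, m ≤ l → Y l ∈ Cube (k + m) (Y m) := by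
    intro m l hml
    induction l with
    | zero => rw [Nat.le_zero.mp hml]; exact self_mem_cube _ _
    | succ l ihl =>
      rcases Nat.lt_or_ge m (l + 1) with h' | h'
      · have h1 : Y (l + 1) ∈ Cube (k + m) (Y l) :=
          cube_antitone (by omega) _ (h l)
        exact cube_trans h1 (ihl (by omega))
      · rw [Nat.le_antisymm hml h']; exact self_mem_cube _ _
  have agree : ∀ m i, i < k + m → ∀ l, m ≤ l → (Y l).1 i = (Y m).1 i := by
    intro m i hi l hml
    exact (chain m l hml).1 i hi
  have hmono : StrictMono (fun i => (Y (i + 1)).1 i) := by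
    apply strictMono_nat_of_lt_succ
    intro i
    have h1 : (Y (i + 2)).1 i = (Y (i + 1)).1 i := agree (i+1) i (by omega) (i+2) (by omega)
    calc (Y (i + 1)).1 i = (Y (i + 2)).1 i := h1.symm
      _ < (Y (i + 2)).1 (i + 1) := (Y (i + 2)).2 (by omega)
  refine ⟨⟨_, hmono⟩, ?_⟩
  intro m
  constructor
  · intro i hi
    simp only
    rcases Nat.lt_or_ge (i + 1) m with h' | h'
    · exact (agree (i + 1) i (by omega) m (by omega)).symm
    · exact (chain m (i + 1) h').1 i hi
  · intro i
    simp only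
    rcases Nat.lt_or_ge (i + 1) m with h' | h'
    · rw [show ((Y (i + 1)).1 i) = (Y m).1 i from (agree (i + 1) i (by omega) m (by omega)).symm]
      exact ⟨i, rfl⟩
    · exact (chain m (i + 1) h').2 i


/-! ### Extracting stems of points of cubes -/

lemma stem_extract {k j' : ℕ} {V X : InfSub} (hX : X ∈ Cube k V) (hj' : k ≤ j') :
    ∃ (j B : ℕ) (s : List ℕ) (hs : StemOK B s), j' < j ∧ j' < B ∧ k ≤ B ∧ s.length = j ∧
      s.take k = List.range k ∧ X ∈ Cube j (compSel V s B hs) := by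
  have hex : ∀ i, ∃ r, V.1 r = X.1 i := fun i => hX.2 i
  set g : ℕ → ℕ := fun i => Nat.find (hex i) with hgdef
  have hg : ∀ i, V.1 (g i) = X.1 i := fun i => Nat.find_spec (hex i)
  have gmono : StrictMono g := by
    intro a b hab
    have : V.1 (g a) < V.1 (g b) := by rw [hg a, hg b]; exact X.2 hab
    exact V.2.lt_iff_lt.mp this
  have gid : ∀ i < k, g i = i := by
    intro i hi
    have : V.1 (g i) = V.1 i := by rw [hg i]; exact hX.1 i hi
    exact V.2.injective this
  set B := g j' + 1 with hBdef
  have hexj : ∃ i, B ≤ g i := ⟨B, le_trans (le_refl _) (gmono.le_apply)⟩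
  set j := Nat.find hexj with hjdef
  have hjspec : B ≤ g j := Nat.find_spec hexj
  have hjmin : ∀ i < j, g i < B := fun i hi => by
    have := Nat.find_min hexj hi; omega
  have hjj' : j' < j := by
    by_contra hc
    have := gmono.monotone (Nat.le_of_not_lt (by omega : ¬ j' < j))
    omega
  have hgeB : ∀ i, j ≤ i → B ≤ g i := fun i hi => le_trans hjspec (gmono.monotone hi)
  set s := (List.range j).map g with hsdef
  have hslen : s.length = j := by simp [hsdef]
  have hsget : ∀ (i : ℕ) (hi : i < s.length), s.get ⟨i, hi⟩ = g i := by
    intro i hi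
    simp [hsdef]
  have hs : StemOK B s := by
    constructor
    · exact List.isChain_iff_pairwise.mpr
        ((List.pairwise_lt_range (n := j)).map g (fun a b hab => gmono hab))
    · intro x hx
      simp only [hsdef, List.mem_map, List.mem_range] at hx
      obtain ⟨i, hi, rfl⟩ := hx
      exact hjmin i hi
  have hgj' : j' ≤ g j' := gmono.le_apply
  refine ⟨j, B, s, hs, hjj', by omega, by omega, hslen, ?_, ?_, ?_⟩
  · have h1 : s.take k = (List.range k).map g := by
      rw [hsdef, ← List.map_take, List.take_range, show min k j = k by omega]
    rw [h1]
    apply List.ext_get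
    · simp
    · intro i ha hb
      simp only [List.get_eq_getElem, List.getElem_map, List.getElem_range]
      exact gid i (by simpa using ha)
  · intro i hi
    rw [compSel_apply_lt hs (by omega), hsget i (by omega)]
    exact (hg i).symm
  · intro i
    rcases Nat.lt_or_ge i j with h | h
    · refine ⟨i, ?_⟩
      rw [compSel_apply_lt hs (by omega), hsget i (by omega)]
      exact hg i
    · refine ⟨g i - B + j, ?_⟩
      rw [compSel_apply_ge hs (by omega)]
      rw [hslen, show g i - B + j - j + B = g i by have := hgeB i h; omega]
      exact hg i


/-! ### Completely Ramsey notions -/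

/-- Open in the Ellentuck topology. -/
def EOpen (U : Set InfSub) : Prop := ∀ X ∈ U, ∃ k, Cube k X ⊆ U

/-- Completely Ramsey null. -/
def RNull (N : Set InfSub) : Prop :=
  ∀ k W, ∃ V ∈ Cube k W, ∀ X ∈ Cube k V, X ∉ N

/-- Completely Ramsey. -/
def CRamsey (A : Set InfSub) : Prop :=
  ∀ k W, ∃ V ∈ Cube k W, (Cube k V ⊆ A ∨ ∀ X ∈ Cube k V, X ∉ A)

lemma RNull.mono {N N' : Set InfSub} (h : N' ⊆ N) (hN : RNull N) : RNull N' := by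
  intro k W
  obtain ⟨V, hV, hV2⟩ := hN k W
  exact ⟨V, hV, fun X hX hX' => hV2 X hX (h hX')⟩

lemma RNull.union {N N' : Set InfSub} (hN : RNull N) (hN' : RNull N') : RNull (N ∪ N') := by
  intro k W
  obtain ⟨V, hV, hV2⟩ := hN k W
  obtain ⟨V', hV', hV'2⟩ := hN' k V
  refine ⟨V', cube_trans hV' hV, fun X hX hX' => ?_⟩
  rcases hX' with h' | h'
  · exact hV2 X (cube_trans hX hV') h'
  · exact hV'2 X hX h'

/-- Fusion: a countable union of completely Ramsey null sets is completely Ramsey null. -/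
lemma RNull.iUnion {N : ℕ → Set InfSub} (hN : ∀ n, RNull (N n)) : RNull (⋃ n, N n) := by
  intro k W
  -- the engine applied at stage `m`
  have estep : ∀ (m : ℕ) (Ym : InfSub),
      ∃ Y', Y' ∈ Cube (k + m) Ym ∧ ∀ a (ha : a ∈ (allStems k m).product (List.range (m + 1))),
        ∀ X ∈ Cube (a.1).length (compSel Y' a.1 (k + m)
          ((allStems_spec (List.pair_mem_product.mp ha).1).2)), X ∉ N a.2 := by
    intro m Ym
    exact engine (k + m) Prod.fst
      (fun a Z => ∀ X ∈ Cube (a.1).length Z, X ∉ N a.2)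
      (fun a Z Z' hZ hZ' X hX => hZ X (cube_subset hZ' hX))
      (fun a _ S => by
        obtain ⟨V, hV, hV2⟩ := hN a.2 (a.1).length S
        exact ⟨V, hV, hV2⟩)
      _ (fun a ha => (allStems_spec (List.pair_mem_product.mp ha).1).2) Ym
  set Y : ℕ → InfSub := fun m => Nat.rec W (fun m Ym => (estep m Ym).choose) m with hY
  have hY0 : Y 0 = W := rfl
  have hYsucc : ∀ m, Y (m + 1) = (estep m (Y m)).choose := fun m => rfl
  have hstage : ∀ m, Y (m + 1) ∈ Cube (k + m) (Y m) := by
    intro m; rw [hYsucc m]; exact (estep m (Y m)).choose_spec.1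
  obtain ⟨V, hV⟩ := fusion_limit Y hstage
  refine ⟨V, (hV 0 : V ∈ Cube k W), ?_⟩
  intro X hX hXU
  obtain ⟨_, ⟨n, rfl⟩, hXn⟩ := hXU
  obtain ⟨j, B, s, hs, hj1, hj2, hj3, hslen, htake, hXc⟩ := stem_extract hX (Nat.le_add_right k n)
  set m := B - k with hm
  have hBm : B = k + m := by omega
  have hsmem : s ∈ allStems k m := by
    refine allStems_complete htake hs.1 ?_
    intro x hx
    have := hs.2 x hx
    omega
  have hamem : (s, n) ∈ (allStems k m).product (List.range (m + 1)) := by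
    rw [List.pair_mem_product]
    exact ⟨hsmem, List.mem_range.mpr (by omega)⟩
  have hprop := (estep m (Y m)).choose_spec.2 (s, n) hamem
  rw [← hYsucc m] at hprop
  have hVm : V ∈ Cube (k + m) (Y (m + 1)) :=
    cube_antitone (by omega) _ (hV (m + 1))
  have htrans : compSel V s (k + m) ((allStems_spec hsmem).2) ∈
      Cube s.length (compSel (Y (m + 1)) s (k + m) ((allStems_spec hsmem).2)) :=
    compSel_mem_cube _ _ (le_refl _) hVm
  have hXc' : X ∈ Cube s.length (compSel V s (k + m) ((allStems_spec hsmem).2)) := by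
    rw [hslen]
    have : compSel V s (k + m) ((allStems_spec hsmem).2) = compSel V s B hs := by
      congr 1
      omega
    rw [this]
    exact hXc
  exact hprop X (cube_trans hXc' htrans) hXn


/-! ### Galvin's lemma: Ellentuck-open sets are completely Ramsey -/

/-- `(j, S)` rejects `U`: no refinement of it is entirely inside `U`. -/
def Rej (U : Set InfSub) (j : ℕ) (S : InfSub) : Prop :=
  ∀ Z ∈ Cube j S, ¬ Cube j Z ⊆ U

lemma rej_persist {U : Set InfSub} {j : ℕ} {S Z : InfSub} (h : Rej U j S)
    (hZ : Z ∈ Cube j S) : Rej U j Z :=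
  fun Z' hZ' => h Z' (cube_trans hZ' hZ)

lemma decide_exists (U : Set InfSub) (j : ℕ) (S : InfSub) :
    ∃ Z ∈ Cube j S, Cube j Z ⊆ U ∨ Rej U j Z := by
  by_cases h : Rej U j S
  · exact ⟨S, self_mem_cube j S, Or.inr h⟩
  · unfold Rej at h
    push_neg at h
    obtain ⟨Z, hZ, hZU⟩ := h
    exact ⟨Z, hZ, Or.inl hZU⟩

/-- Deleting the entry at position `B`. -/
def delAt (B : ℕ) (R : InfSub) : InfSub :=
  ⟨fun r => if r < B then R.1 r else R.1 (r + 1), by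
    apply strictMono_nat_of_lt_succ
    intro i
    rcases lt_trichotomy (i + 1) B with h | h | h
    · simp only [if_pos (show i < B by omega), if_pos h]; exact R.2 (by omega)
    · simp only [if_pos (show i < B by omega), if_neg (show ¬ i + 1 < B by omega)]
      exact R.2 (by omega)
    · simp only [if_neg (show ¬ i < B by omega), if_neg (show ¬ i + 1 < B by omega)]
      exact R.2 (by omega)⟩

lemma delAt_mem (B : ℕ) (R : InfSub) : delAt B R ∈ Cube B R := by
  constructor
  · intro i hi; simp [delAt, if_pos hi]
  · intro i
    rcases lt_or_ge i B with h | h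
    · exact ⟨i, by simp [delAt, if_pos h]⟩
    · exact ⟨i + 1, by simp [delAt, if_neg (show ¬ i < B by omega)]⟩

lemma get_append_left {l m : List ℕ} {r : ℕ} (hr : r < l.length) (h2 : r < (l ++ m).length) :
    (l ++ m).get ⟨r, h2⟩ = l.get ⟨r, hr⟩ := by
  simp only [List.get_eq_getElem]
  exact List.getElem_append_left _

lemma get_concat_len {l : List ℕ} {a : ℕ} (h : l.length < (l ++ [a]).length) :
    (l ++ [a]).get ⟨l.length, h⟩ = a := by
  simp only [List.get_eq_getElem]
  exact List.getElem_concat_length rfl _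

/-- One fusion stage for Galvin's lemma. -/
lemma galvin_step {U : Set InfSub} {k m : ℕ} {Ym : InfSub}
    (hinv : ∀ s (hsm : s ∈ allStems k m),
      Rej U s.length (compSel Ym s (k + m) (allStems_spec hsm).2)) :
    ∃ Y', Y' ∈ Cube (k + m) Ym ∧ ∀ s' (hsm : s' ∈ allStems k (m + 1)),
      Rej U s'.length (compSel Y' s' (k + m + 1) (allStems_spec hsm).2) := by
  classical
  set B := k + m with hBdef
  set L := allStems k m with hLdef
  -- membership of extended stems
  have hextmem : ∀ s ∈ L, s ++ [B] ∈ allStems k (m + 1) := by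
    intro s hsL
    simp only [allStems, List.mem_append, List.mem_map]
    exact Or.inr ⟨s, hsL, rfl⟩
  have hLOK : ∀ a ∈ L.map (· ++ [B]), StemOK (B + 1) (id a) := by
    intro a ha
    obtain ⟨s, hsL, rfl⟩ := List.mem_map.mp ha
    exact (allStems_spec (hextmem s hsL)).2
  -- one inner step: decide all extended stems over the current tail
  have istep : ∀ Ri : InfSub, ∃ R', R' ∈ Cube (B + 1) Ri ∧
      ∀ a (ha : a ∈ L.map (· ++ [B])),
        Cube a.length (compSel R' a (B + 1) (hLOK a ha)) ⊆ U ∨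
          Rej U a.length (compSel R' a (B + 1) (hLOK a ha)) := by
    intro Ri
    exact engine (B + 1) id
      (fun a Z => Cube a.length Z ⊆ U ∨ Rej U a.length Z)
      (fun a Z Z' hP0 hZ' => by
        rcases hP0 with h | h
        · exact Or.inl (fun X hX => h (cube_subset hZ' hX))
        · exact Or.inr (rej_persist h hZ'))
      (fun a _ S => decide_exists U a.length S)
      (L.map (· ++ [B])) hLOK Ri
  -- the inner fusion sequence
  set R : ℕ → InfSub := fun i => Nat.rec Ym (fun _ Ri => delAt B (istep Ri).choose) i with hR
  set R' : ℕ → InfSub := fun i => (istep (R i)).choose with hR'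
  have hRsucc : ∀ i, R (i + 1) = delAt B (R' i) := fun i => rfl
  have hR'mem : ∀ i, R' i ∈ Cube (B + 1) (R i) := fun i => (istep (R i)).choose_spec.1
  have hR'dec : ∀ i a (ha : a ∈ L.map (· ++ [B])),
      Cube a.length (compSel (R' i) a (B + 1) (hLOK a ha)) ⊆ U ∨
        Rej U a.length (compSel (R' i) a (B + 1) (hLOK a ha)) :=
    fun i => (istep (R i)).choose_spec.2
  have hRstep : ∀ i, R (i + 1) ∈ Cube B (R i) := by
    intro i
    rw [hRsucc i]
    exact cube_trans (delAt_mem B (R' i)) (cube_antitone (by omega) _ (hR'mem i))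
  have hRchain : ∀ i l, i ≤ l → R l ∈ Cube B (R i) := by
    intro i l hil
    induction l with
    | zero => rw [Nat.le_zero.mp hil]; exact self_mem_cube _ _
    | succ l ihl =>
      rcases Nat.lt_or_ge i (l + 1) with h' | h'
      · exact cube_trans (hRstep l) (ihl (by omega))
      · rw [Nat.le_antisymm hil h']; exact self_mem_cube _ _
  have hRYm : ∀ i, R i ∈ Cube B Ym := fun i => hRchain 0 i (Nat.zero_le i)
  set b : ℕ → ℕ := fun i => (R i).1 B with hb
  have hbmono : StrictMono b := by
    apply strictMono_nat_of_lt_succ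
    intro i
    have h1 : (R (i + 1)).1 B = (R' i).1 (B + 1) := by
      rw [hRsucc i]; simp [delAt]
    have h2 : (R' i).1 B = (R i).1 B := (hR'mem i).1 B (by omega)
    calc b i = (R' i).1 B := h2.symm
      _ < (R' i).1 (B + 1) := (R' i).2 (by omega)
      _ = b (i + 1) := h1.symm
  have hbYm : ∀ i, ∃ r, B ≤ r ∧ Ym.1 r = b i := fun i => mem_cube_ge (hRYm i) (le_refl B)
  have hbgeYm : ∀ i, Ym.1 B ≤ b i := fun i => le_of_mem_cube (hRYm i) B
  have hbchain : ∀ i l, i < l → ∃ t, B + 1 ≤ t ∧ (R' i).1 t = b l := by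
    intro i l hil
    have h1 : R l ∈ Cube B (R' i) := by
      have h2 : R l ∈ Cube B (R (i + 1)) := hRchain (i + 1) l hil
      have h3 : R (i + 1) ∈ Cube B (R' i) := by
        rw [hRsucc i]
        exact cube_antitone (by omega) _ (delAt_mem B (R' i))
      exact cube_trans h2 h3
    obtain ⟨t, htB, ht⟩ := mem_cube_ge h1 (le_refl B)
    refine ⟨t, ?_, ht⟩
    rcases Nat.lt_or_ge B t with h' | h'
    · omega
    · exfalso
      have : t = B := by omega
      subst this
      have h4 : (R' i).1 B = (R i).1 B := (hR'mem i).1 B (by omega)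
      have h5 : b i = b l := by
        show (R i).1 B = b l
        rw [← h4]; exact ht
      exact (hbmono hil).ne h5
  -- decisions as a function into a finite type
  set d : ℕ → (Fin L.length → Bool) := fun i idx =>
    if Rej U (L.get idx ++ [B]).length
        (compSel (R' i) (L.get idx ++ [B]) (B + 1)
          (hLOK _ (List.mem_map_of_mem (L.get_mem _)))) then true else false with hd
  obtain ⟨y, hy⟩ := Finite.exists_infinite_fiber d
  have hIinf : (setOf (fun i => d i = y)).Infinite := by
    rw [← Set.infinite_coe_iff]
    exact hy
  set e : ℕ → ℕ := Nat.nth (fun i => d i = y) with he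
  have hemono : StrictMono e := Nat.nth_strictMono hIinf
  have hemem : ∀ i, d (e i) = y := fun i => Nat.nth_mem_of_infinite hIinf i
  by_cases hacc : ∃ idx, y idx = false
  · -- some stem gets accepted along the fiber: contradiction with the invariant
    exfalso
    obtain ⟨idx, hidx⟩ := hacc
    set s := L.get idx with hsdef
    set j := s.length with hj
    have hsL : s ∈ L := L.get_mem _
    have hsOK : StemOK B s := (allStems_spec (hLdef ▸ hsL)).2
    have hsltB : ∀ (r : ℕ) (hr : r < s.length), s.get ⟨r, hr⟩ < B :=
      fun r hr => hsOK.2 _ (s.get_mem _)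
    -- the accepted conditions
    have haccI : ∀ i, Cube (s ++ [B]).length
        (compSel (R' (e i)) (s ++ [B]) (B + 1)
          (hLOK _ (List.mem_map_of_mem hsL))) ⊆ U := by
      intro i
      rcases hR'dec (e i) (s ++ [B]) (List.mem_map_of_mem hsL) with h | h
      · exact h
      · exfalso
        have : d (e i) idx = true := by
          rw [hd]
          simp only [← hsdef]
          rw [if_pos h]
        rw [hemem i] at this
        rw [hidx] at this
        simp at this
    -- build the diagonal object `R*`
    have hjunk : ∀ (r : ℕ) (hr : r < j) (i : ℕ), Ym.1 (s.get ⟨r, hr⟩) < b (e i) := by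
      intro r hr i
      exact lt_of_lt_of_le (Ym.2 (hsltB r hr)) (le_trans (hbgeYm (e 0)) (by
        exact (hbmono.comp hemono).monotone (Nat.zero_le i) |>.trans_eq rfl 
        )) |>.trans_le (le_refl _)
    have hRstarMono : StrictMono (fun r => if h : r < j then Ym.1 (s.get ⟨r, h⟩)
        else b (e (r - j))) := by
      apply strictMono_nat_of_lt_succ
      intro r
      rcases lt_trichotomy (r + 1) j with h | h | h
      · rw [dif_pos (show r < j by omega), dif_pos h]
        exact Ym.2 (List.isChain_iff_getElem.mp hsOK.1 r (by omega))
      · rw [dif_pos (show r < j by omega), dif_neg (show ¬ r + 1 < j by omega)]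
        exact hjunk r (by omega) _
      · rw [dif_neg (show ¬ r < j by omega), dif_neg (show ¬ r + 1 < j by omega)]
        exact (hbmono.comp hemono) (by omega)
    set Rstar : InfSub := ⟨_, hRstarMono⟩ with hRstar
    have hRstarmem : Rstar ∈ Cube j (compSel Ym s B hsOK) := by
      constructor
      · intro r hr
        rw [compSel_apply_lt hsOK (hj ▸ hr)]
        simp only [hRstar, dif_pos hr]
      · intro r
        rcases lt_or_ge r j with h | h
        · refine ⟨r, ?_⟩
          rw [compSel_apply_lt hsOK (hj ▸ h)]
          simp only [hRstar, dif_pos h]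
        · obtain ⟨t, htB, ht⟩ := hbYm (e (r - j))
          refine ⟨t - B + j, ?_⟩
          rw [compSel_apply_ge hsOK (by omega)]
          rw [← hj, show t - B + j - j + B = t by omega]
          simp only [hRstar, dif_neg (show ¬ r < j by omega)]
          exact ht
    -- `Cube j Rstar ⊆ U`
    have hsub : Cube j Rstar ⊆ U := by
      intro X hX
      obtain ⟨r0, hr0j, hr0⟩ := mem_cube_ge hX (le_refl j)
      have hr0val : X.1 j = b (e (r0 - j)) := by
        rw [← hr0]
        simp only [hRstar, dif_neg (show ¬ r0 < j by omega)]
      set i0 := r0 - j with hi0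
      set C := compSel (R' (e i0)) (s ++ [B]) (B + 1)
        (hLOK _ (List.mem_map_of_mem hsL)) with hC
      have hlen : (s ++ [B]).length = j + 1 := by simp [hj]
      have hR'Ym : ∀ i, R' i ∈ Cube B Ym :=
        fun i => cube_trans (cube_antitone (by omega) _ (hR'mem i)) (hRYm i)
      have hCr : ∀ (r : ℕ) (hr : r < j), C.1 r = Ym.1 (s.get ⟨r, hr⟩) := by
        intro r hr
        rw [hC, compSel_apply_lt _ (by rw [hlen]; omega)]
        have hget : (s ++ [B]).get ⟨r, by rw [hlen]; omega⟩ = s.get ⟨r, hr⟩ :=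
          get_append_left hr _
        rw [hget]
        exact (hR'Ym (e i0)).1 _ (hsltB r hr)
      have hCj : C.1 j = b (e i0) := by
        rw [hC, compSel_apply_lt _ (by rw [hlen]; omega)]
        have hget : (s ++ [B]).get ⟨j, by rw [hlen]; omega⟩ = B := get_concat_len _
        rw [hget]
        have h1 : (R' (e i0)).1 B = (R (e i0)).1 B := (hR'mem (e i0)).1 B (by omega)
        exact h1
      have hXC : X ∈ Cube (j + 1) C := by
        constructor
        · intro r hr
          rcases Nat.lt_or_ge r j with h | h
          · rw [hCr r h]
            have h1 : X.1 r = Rstar.1 r := hX.1 r h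
            rw [h1]
            simp only [hRstar, dif_pos h]
          · have : r = j := by omega
            subst this
            rw [hCj, hr0val]
        · intro r
          rcases Nat.lt_or_ge r (j + 1) with h | h
          · refine ⟨r, ?_⟩
            rcases Nat.lt_or_ge r j with h' | h'
            · rw [hCr r h']
              have h1 : X.1 r = Rstar.1 r := hX.1 r h'
              rw [h1]; simp only [hRstar, dif_pos h']
            · have : r = j := by omega
              subst this
              rw [hCj, hr0val]
          · obtain ⟨t, htj, ht⟩ := mem_cube_ge hX (show j ≤ r by omega)
            have htval : X.1 r = b (e (t - j)) := by
              rw [← ht]; simp only [hRstar, dif_neg (show ¬ t < j by omega)]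
            have hgt : e i0 < e (t - j) := by
              have h1 : X.1 j < X.1 r := X.2 (by omega)
              rw [hr0val, htval] at h1
              exact hemono ((hbmono.comp hemono).lt_iff_lt.mp h1)
            obtain ⟨t', ht'B, ht'⟩ := hbchain (e i0) (e (t - j)) hgt
            refine ⟨t' - (B + 1) + (j + 1), ?_⟩
            rw [hC, compSel_apply_ge _ (by rw [hlen]; omega), hlen]
            rw [show t' - (B + 1) + (j + 1) - (j + 1) + (B + 1) = t' by omega]
            rw [ht', htval]
      have := haccI i0
      rw [hlen] at this
      exact this hXC
    exact hinv s (hLdef ▸ hsL) Rstar hRstarmem hsub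
  · -- all stems get rejected along the fiber: build the next stage
    push_neg at hacc
    have hally : ∀ idx, y idx = true := by
      intro idx
      rcases Bool.eq_false_or_eq_true (y idx) with h | h
      · exact h
      · exact absurd h (hacc idx)
    have hjunk2 : ∀ i < B, Ym.1 i < b (e 0) := by
      intro i hi
      exact lt_of_lt_of_le (Ym.2 hi) (hbgeYm (e 0))
    have hY'mono : StrictMono (fun r => if r < B then Ym.1 r else b (e (r - B))) := by
      apply strictMono_nat_of_lt_succ
      intro r
      rcases lt_trichotomy (r + 1) B with h | h | h
      · rw [if_pos (show r < B by omega), if_pos h]; exact Ym.2 (by omega)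
      · rw [if_pos (show r < B by omega), if_neg (show ¬ r + 1 < B by omega)]
        rw [show r + 1 - B = 0 by omega]
        exact hjunk2 r (by omega)
      · rw [if_neg (show ¬ r < B by omega), if_neg (show ¬ r + 1 < B by omega)]
        exact (hbmono.comp hemono) (by omega)
    set Y' : InfSub := ⟨_, hY'mono⟩ with hY'
    have hY'mem : Y' ∈ Cube B Ym := by
      constructor
      · intro i hi; simp only [hY', if_pos hi]
      · intro i
        rcases lt_or_ge i B with h | h
        · exact ⟨i, by simp only [hY', if_pos h]⟩
        · obtain ⟨t, htB, ht⟩ := hbYm (e (i - B))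
          exact ⟨t, by simp only [hY', if_neg (show ¬ i < B by omega)]; exact ht⟩
    refine ⟨Y', hY'mem, ?_⟩
    intro s' hsm'
    have hs'OK : StemOK (B + 1) s' := (allStems_spec hsm').2
    simp only [allStems, List.mem_append, List.mem_map] at hsm'
    rcases hsm' with hold | ⟨s, hsL, rfl⟩
    · -- old stem: rejection persists
      have hsOK : StemOK B s' := (allStems_spec (hLdef ▸ hold)).2
      have htrans : compSel Y' s' (B + 1) hs'OK ∈
          Cube s'.length (compSel Ym s' B hsOK) :=
        compSel_mem_cube hsOK hs'OK (by omega) hY'mem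
      exact rej_persist (hinv s' (hLdef ▸ hold)) htrans
    · -- new stem `s ++ [B]`
      obtain ⟨idx, hidx⟩ := List.mem_iff_get.mp (show s ∈ L from hLdef ▸ hsL)
      set j := s.length with hj
      have hlen : (s ++ [B]).length = j + 1 := by simp [hj]
      have hrej : Rej U (s ++ [B]).length
          (compSel (R' (e 0)) (s ++ [B]) (B + 1)
            (hLOK _ (List.mem_map_of_mem (hLdef ▸ hsL)))) := by
        rcases hR'dec (e 0) (s ++ [B]) (List.mem_map_of_mem (hLdef ▸ hsL)) with h | h
        · exfalso
          have hd0 : d (e 0) idx = false := by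
            rw [hd]
            simp only [hidx]
            rw [if_neg]
            intro hc
            exact hc _ (self_mem_cube _ _) h
          rw [hemem 0, hally idx] at hd0
          simp at hd0
        · exact h
      set C := compSel (R' (e 0)) (s ++ [B]) (B + 1)
        (hLOK _ (List.mem_map_of_mem (hLdef ▸ hsL))) with hC
      have hR'Ym : R' (e 0) ∈ Cube B Ym :=
        cube_trans (cube_antitone (by omega) _ (hR'mem (e 0))) (hRYm (e 0))
      have hsltB : ∀ (r : ℕ) (hr : r < s.length), s.get ⟨r, hr⟩ < B :=
        fun r hr => (allStems_spec (hLdef ▸ hsL)).2.2 _ (s.get_mem _)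
      have hCr : ∀ (r : ℕ) (hr : r < j), C.1 r = Ym.1 (s.get ⟨r, hr⟩) := by
        intro r hr
        rw [hC, compSel_apply_lt _ (by rw [hlen]; omega)]
        have hget : (s ++ [B]).get ⟨r, by rw [hlen]; omega⟩ = s.get ⟨r, hr⟩ :=
          get_append_left hr _
        rw [hget]
        exact hR'Ym.1 _ (hsltB r hr)
      have hCj : C.1 j = b (e 0) := by
        rw [hC, compSel_apply_lt _ (by rw [hlen]; omega)]
        have hget : (s ++ [B]).get ⟨j, by rw [hlen]; omega⟩ = B :=
          get_concat_len _
        rw [hget]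
        exact (hR'mem (e 0)).1 B (by omega)
      have hmem2 : compSel Y' (s ++ [B]) (B + 1) hs'OK ∈ Cube (j + 1) C := by
        constructor
        · intro r hr
          rcases Nat.lt_or_ge r j with h | h
          · rw [hCr r h, compSel_apply_lt hs'OK (by rw [hlen]; omega)]
            have hget : (s ++ [B]).get ⟨r, by rw [hlen]; omega⟩ = s.get ⟨r, h⟩ :=
              get_append_left h _
            rw [hget]
            simp only [hY', if_pos (hsltB r h)]
          · have : r = j := by omega
            subst this
            rw [hCj, compSel_apply_lt hs'OK (by rw [hlen]; omega)]
            have hget : (s ++ [B]).get ⟨j, by rw [hlen]; omega⟩ = B :=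
              get_concat_len _
            rw [hget]
            simp only [hY', if_neg (show ¬ B < B by omega), show B - B = 0 by omega]
        · intro r
          rcases Nat.lt_or_ge r (j + 1) with h | h
          · refine ⟨r, ?_⟩
            rcases Nat.lt_or_ge r j with h' | h'
            · rw [hCr r h', compSel_apply_lt hs'OK (by rw [hlen]; omega)]
              have hget : (s ++ [B]).get ⟨r, by rw [hlen]; omega⟩ = s.get ⟨r, h'⟩ :=
                get_append_left h' _
              rw [hget]
              simp only [hY', if_pos (hsltB r h')]
            · have : r = j := by omega
              subst this
              rw [hCj, compSel_apply_lt hs'OK (by rw [hlen]; omega)]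
              have hget : (s ++ [B]).get ⟨j, by rw [hlen]; omega⟩ = B :=
                get_concat_len _
              rw [hget]
              simp only [hY', if_neg (show ¬ B < B by omega), show B - B = 0 by omega]
          · -- tail values of `compSel Y' (s++[B]) (B+1)` are later `b`'s
            rw [compSel_apply_ge hs'OK (by rw [hlen]; omega), hlen]
            have hidxB : ¬ r - (j + 1) + (B + 1) < B := by omega
            simp only [hY', hidxB, if_neg hidxB]
            set a := r - (j + 1) + (B + 1) - B with ha
            have ha1 : 1 ≤ a := by omega
            obtain ⟨t', ht'B, ht'⟩ := hbchain (e 0) (e a) (hemono (by omega))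
            refine ⟨t' - (B + 1) + (j + 1), ?_⟩
            rw [hC, compSel_apply_ge _ (by rw [hlen]; omega), hlen]
            rw [show t' - (B + 1) + (j + 1) - (j + 1) + (B + 1) = t' by omega]
            exact ht'
      have := rej_persist hrej (hlen ▸ hmem2)
      rw [hlen] at this ⊢
      exact this


lemma sel_range (k : ℕ) : sel (List.range k) k = id := by
  funext i
  unfold sel
  rcases Nat.lt_or_ge i k with hik | hik
  · rw [dif_pos (by simpa using hik)]
    simp
  · rw [dif_neg (by simpa using not_lt.mpr hik)]
    simp only [List.length_range, id_eq]
    omega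

lemma compSel_range (Y : InfSub) (k : ℕ) (h : StemOK k (List.range k)) :
    compSel Y (List.range k) k h = Y := by
  apply Subtype.ext
  show Y.1 ∘ sel (List.range k) k = Y.1
  rw [sel_range]
  rfl

/-- Galvin's lemma: Ellentuck-open sets are completely Ramsey. -/
theorem eopen_cramsey {U : Set InfSub} (hU : EOpen U) : CRamsey U := by
  intro k W
  obtain ⟨Z₀, hZ₀, hdec⟩ := decide_exists U k W
  rcases hdec with hacc | hrej
  · exact ⟨Z₀, hZ₀, Or.inl hacc⟩
  set Inv : ℕ → InfSub → Prop := fun m Y =>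
    ∀ s (hsm : s ∈ allStems k m), Rej U s.length (compSel Y s (k + m) (allStems_spec hsm).2)
    with hInv
  have hbase : Inv 0 Z₀ := by
    intro s hsm
    simp only [allStems, List.mem_singleton] at hsm
    subst hsm
    have h1 : compSel Z₀ (List.range k) (k + 0) (allStems_spec (by simp [allStems])).2 = Z₀ :=
      compSel_range Z₀ k _
    rw [h1]
    simpa using hrej
  have gstep : ∀ m (Y : InfSub), Inv m Y → ∃ Y', Y' ∈ Cube (k + m) Y ∧ Inv (m + 1) Y' :=
    fun m Y h => galvin_step h
  set seq : (m : ℕ) → {Y : InfSub // Inv m Y} := fun m => Nat.rec ⟨Z₀, hbase⟩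
    (fun m p => ⟨(gstep m p.1 p.2).choose, (gstep m p.1 p.2).choose_spec.2⟩) m with hseqdef
  set Y : ℕ → InfSub := fun m => (seq m).1 with hYdef
  have hYinv : ∀ m, Inv m (Y m) := fun m => (seq m).2
  have hstage : ∀ m, Y (m + 1) ∈ Cube (k + m) (Y m) :=
    fun m => (gstep m (Y m) (seq m).2).choose_spec.1
  obtain ⟨V, hV⟩ := fusion_limit Y hstage
  refine ⟨V, cube_trans (hV 0 : V ∈ Cube k Z₀) hZ₀, Or.inr ?_⟩
  intro X hX hXU
  obtain ⟨k₁, hk₁⟩ := hU X hXU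
  set j' := max k₁ k with hj'def
  have hj'X : Cube j' X ⊆ U := fun Z hZ => hk₁ (cube_antitone (le_max_left _ _) X hZ)
  obtain ⟨j, B, s, hs, hj1, hj2, hj3, hslen, htake, hXc⟩ := stem_extract hX (le_max_right k₁ k)
  set m := B - k with hm
  have hBm : B = k + m := by omega
  have hsmem : s ∈ allStems k m :=
    allStems_complete htake hs.1 (fun x hx => by have := hs.2 x hx; omega)
  have hrejm := hYinv m s hsmem
  have hVm : V ∈ Cube (k + m) (Y m) := hV m
  have htrans : compSel V s (k + m) ((allStems_spec hsmem).2) ∈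
      Cube s.length (compSel (Y m) s (k + m) ((allStems_spec hsmem).2)) :=
    compSel_mem_cube _ _ (le_refl _) hVm
  have hrejV := rej_persist hrejm htrans
  have hXc' : X ∈ Cube s.length (compSel V s (k + m) ((allStems_spec hsmem).2)) := by
    rw [hslen]
    have heq : compSel V s (k + m) ((allStems_spec hsmem).2) = compSel V s B hs := by
      congr 1
      omega
    rw [heq]
    exact hXc
  exact hrejV X hXc' (fun Z hZ => hj'X (cube_antitone (by omega) X hZ))


/-! ### The σ-algebra of sets with the Ellentuck Baire property -/

def extE (U : Set InfSub) : Set InfSub := {X | ∃ k, ∀ Z ∈ Cube k X, Z ∉ U}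

lemma eopen_extE (U : Set InfSub) : EOpen (extE U) := by
  rintro X ⟨k, hk⟩
  exact ⟨k, fun Y hY => ⟨k, fun Z hZ => hk Z (cube_trans hZ hY)⟩⟩

lemma extE_disjoint {U : Set InfSub} {X : InfSub} (h : X ∈ extE U) : X ∉ U := by
  obtain ⟨k, hk⟩ := h
  exact hk X (self_mem_cube k X)

lemma eopen_union {U V : Set InfSub} (hU : EOpen U) (hV : EOpen V) : EOpen (U ∪ V) := by
  rintro X (hX | hX)
  · obtain ⟨k, hk⟩ := hU X hX
    exact ⟨k, fun Z hZ => Or.inl (hk hZ)⟩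
  · obtain ⟨k, hk⟩ := hV X hX
    exact ⟨k, fun Z hZ => Or.inr (hk hZ)⟩

lemma eopen_iUnion {U : ℕ → Set InfSub} (hU : ∀ n, EOpen (U n)) : EOpen (⋃ n, U n) := by
  intro X hX
  obtain ⟨_, ⟨n, rfl⟩, hXn⟩ := hX
  obtain ⟨k, hk⟩ := hU n X hXn
  exact ⟨k, fun Z hZ => Set.mem_iUnion.mpr ⟨n, hk hZ⟩⟩

lemma boundary_rnull {U : Set InfSub} (hU : EOpen U) :
    RNull {X | X ∉ U ∧ X ∉ extE U} := by
  intro k W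
  obtain ⟨V, hV, hd⟩ := eopen_cramsey (eopen_union hU (eopen_extE U)) k W
  rcases hd with h | h
  · refine ⟨V, hV, fun X hX hXF => ?_⟩
    rcases h hX with h' | h'
    · exact hXF.1 h'
    · exact hXF.2 h'
  · exfalso
    have h1 : V ∈ extE U := ⟨k, fun Z hZ hZU => h Z hZ (Or.inl hZU)⟩
    exact h V (self_mem_cube k V) (Or.inr h1)

/-- A set with the Ellentuck Baire property. -/
def GoodSet (A : Set InfSub) : Prop :=
  ∃ U, EOpen U ∧ RNull ((A \ U) ∪ (U \ A))

lemma good_of_eopen {U : Set InfSub} (hU : EOpen U) : GoodSet U := by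
  refine ⟨U, hU, ?_⟩
  intro k W
  refine ⟨W, self_mem_cube k W, fun X _ hX => ?_⟩
  rcases hX with ⟨h1, h2⟩ | ⟨h1, h2⟩ <;> exact h2 h1

lemma good_empty : GoodSet (∅ : Set InfSub) :=
  good_of_eopen (fun X hX => absurd hX (Set.notMem_empty X))

lemma good_compl {A : Set InfSub} (h : GoodSet A) : GoodSet Aᶜ := by
  obtain ⟨U, hU, hN⟩ := h
  refine ⟨extE U, eopen_extE U, ?_⟩
  have hsub : (Aᶜ \ extE U) ∪ (extE U \ Aᶜ) ⊆
      ((A \ U) ∪ (U \ A)) ∪ {X | X ∉ U ∧ X ∉ extE U} := by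
    rintro X (⟨h1, h2⟩ | ⟨h1, h2⟩)
    · by_cases hXU : X ∈ U
      · exact Or.inl (Or.inr ⟨hXU, h1⟩)
      · exact Or.inr ⟨hXU, h2⟩
    · have h3 : X ∈ A := not_not.mp h2
      exact Or.inl (Or.inl ⟨h3, extE_disjoint h1⟩)
  exact RNull.mono hsub (RNull.union hN (boundary_rnull hU))

lemma good_iUnion {A : ℕ → Set InfSub} (h : ∀ n, GoodSet (A n)) : GoodSet (⋃ n, A n) := by
  choose U hU hN using h
  refine ⟨⋃ n, U n, eopen_iUnion hU, ?_⟩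
  have hsub : ((⋃ n, A n) \ ⋃ n, U n) ∪ ((⋃ n, U n) \ ⋃ n, A n) ⊆
      ⋃ n, ((A n \ U n) ∪ (U n \ A n)) := by
    rintro X (⟨h1, h2⟩ | ⟨h1, h2⟩)
    · obtain ⟨_, ⟨n, rfl⟩, hn⟩ := h1
      exact Set.mem_iUnion.mpr ⟨n, Or.inl ⟨hn, fun hc => h2 (Set.mem_iUnion.mpr ⟨n, hc⟩)⟩⟩
    · obtain ⟨_, ⟨n, rfl⟩, hn⟩ := h1
      exact Set.mem_iUnion.mpr ⟨n, Or.inr ⟨hn, fun hc => h2 (Set.mem_iUnion.mpr ⟨n, hc⟩)⟩⟩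
  exact RNull.mono hsub (RNull.iUnion hN)

lemma good_cramsey {A : Set InfSub} (h : GoodSet A) : CRamsey A := by
  obtain ⟨U, hU, hN⟩ := h
  intro k W
  obtain ⟨V₁, hV₁, hmiss⟩ := hN k W
  obtain ⟨V₂, hV₂, hd⟩ := eopen_cramsey hU k V₁
  refine ⟨V₂, cube_trans hV₂ hV₁, ?_⟩
  rcases hd with h | h
  · refine Or.inl (fun X hX => ?_)
    have hXU : X ∈ U := h hX
    have := hmiss X (cube_trans hX hV₂)
    by_contra hXA
    exact this (Or.inr ⟨hXU, hXA⟩)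
  · refine Or.inr (fun X hX hXA => ?_)
    have hXU : X ∉ U := h X hX
    exact hmiss X (cube_trans hX hV₂) (Or.inl ⟨hXA, hXU⟩)

/-! ### Measurable sets are completely Ramsey -/

lemma eopen_of_isOpen {O : Set (ℕ → ℕ)} (hO : IsOpen O) :
    EOpen (Subtype.val ⁻¹' O : Set InfSub) := by
  intro X hX
  obtain ⟨I, u, hIu, hsub⟩ := isOpen_pi_iff.mp hO X.1 hX
  refine ⟨I.sup id + 1, fun Z hZ => ?_⟩
  apply hsub
  intro i hi
  have hik : i < I.sup id + 1 := Nat.lt_succ_of_le (Finset.le_sup (f := id) hi)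
  rw [hZ.1 i hik]
  exact (hIu i hi).2

lemma good_of_measurable {A : Set InfSub} (hA : MeasurableSet A) : GoodSet A := by
  obtain ⟨B, hB, rfl⟩ := hA
  let good : MeasurableSpace (ℕ → ℕ) :=
    { MeasurableSet' := fun B => GoodSet (Subtype.val ⁻¹' B : Set InfSub)
      measurableSet_empty := good_empty
      measurableSet_compl := fun s hs => good_compl hs
      measurableSet_iUnion := fun f hf => by
        have h2 : GoodSet (⋃ n, (Subtype.val ⁻¹' f n : Set InfSub)) := good_iUnion hf
        show GoodSet (Subtype.val ⁻¹' ⋃ n, f n : Set InfSub)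
        rw [Set.preimage_iUnion]
        exact h2 }
  have hle : (MeasurableSpace.pi : MeasurableSpace (ℕ → ℕ)) ≤ good := by
    rw [show (MeasurableSpace.pi : MeasurableSpace (ℕ → ℕ)) = borel _ from
      BorelSpace.measurable_eq]
    exact MeasurableSpace.generateFrom_le (fun O hO => good_of_eopen (eopen_of_isOpen hO))
  exact hle B hB

theorem cramsey_of_measurable {A : Set InfSub} (hA : MeasurableSet A) : CRamsey A :=
  good_cramsey (good_of_measurable hA)

end GP

/-- the shift graph has no finite Borel coloring. -/
theorem shiftGraph_no_finite_borel_coloring :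
    ∀ (n : ℕ) (c : InfSub → Fin n), Measurable c → ∃ X : InfSub, c X = c (shiftS X) := by
  intro n c hc
  rcases n with _ | n
  · exact (c ⟨id, strictMono_id⟩).elim0
  · have key : ∀ m : ℕ, ∃ V : InfSub, (∃ i, GP.Cube 0 V ⊆ c ⁻¹' {i}) ∨
        (∀ i : Fin (n + 1), (i : ℕ) < m → ∀ X ∈ GP.Cube 0 V, c X ≠ i) := by
      intro m
      induction m with
      | zero =>
        exact ⟨⟨id, strictMono_id⟩, Or.inr (fun i hi X hX => absurd hi (Nat.not_lt_zero _))⟩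
      | succ m ih =>
        obtain ⟨V, hV⟩ := ih
        rcases hV with h | h
        · exact ⟨V, Or.inl h⟩
        · rcases Nat.lt_or_ge m (n + 1) with hm | hm
          · set i0 : Fin (n + 1) := ⟨m, hm⟩ with hi0
            obtain ⟨V', hV', hd⟩ :=
              GP.cramsey_of_measurable (hc (measurableSet_singleton i0)) 0 V
            rcases hd with h' | h'
            · exact ⟨V', Or.inl ⟨i0, h'⟩⟩
            · refine ⟨V', Or.inr (fun i hi X hX => ?_)⟩
              rcases Nat.lt_or_ge (i : ℕ) m with h2 | h2
              · exact h i h2 X (GP.cube_trans hX hV')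
              · have hieq : i = i0 := Fin.ext (by simp [hi0]; omega)
                subst hieq
                intro hcX
                exact h' X hX (by simp [hcX])
          · exact ⟨V, Or.inr (fun i hi X hX => h i (by have := i.2; omega) X hX)⟩
    obtain ⟨V, hV⟩ := key (n + 1)
    rcases hV with ⟨i, hi⟩ | h
    · refine ⟨V, ?_⟩
      have h1 : c V = i := hi (GP.self_mem_cube 0 V)
      have h2 : c (shiftS V) = i := hi (GP.shiftS_mem_cube V)
      rw [h1, h2]
    · exact absurd rfl (h (c V) (c V).2 V (GP.self_mem_cube 0 V))
end

section
/- The Borel chromatic number of the shift graph is exactly ℵ₀: there is a Borel coloring of G_S with countably many colors (e.g., X ↦ min X), but no Borel coloring with finitely many colors. -/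
namespace GP

open Set

def below (s : Finset ℕ) (B : Set ℕ) : Prop := ∀ a ∈ s, ∀ b ∈ B, a < b

def seg (s : Finset ℕ) (B : Set ℕ) : Set (Set ℕ) :=
  {X | X.Infinite ∧ ↑s ⊆ X ∧ ∀ x ∈ X, x ∉ s → x ∈ B}

lemma seg_mono {s : Finset ℕ} {B C : Set ℕ} (h : C ⊆ B) : seg s C ⊆ seg s B :=
  fun _ hX => ⟨hX.1, hX.2.1, fun x hx hxs => h (hX.2.2 x hx hxs)⟩

def CR (A : Set (Set ℕ)) : Prop :=
  ∀ s B, B.Infinite → below s B →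
    ∃ C, C ⊆ B ∧ C.Infinite ∧ (seg s C ⊆ A ∨ seg s C ∩ A = ∅)

/-- generic helper: a finite subset of the range of `c` is inside a finite image. -/
lemma finset_subset_image_range {c : ℕ → ℕ} {t : Finset ℕ} (h : ↑t ⊆ Set.range c) :
    ∃ k, t ⊆ (Finset.range k).image c := by
  classical
  induction t using Finset.induction_on with
  | empty => exact ⟨0, by simp⟩
  | @insert a t ha ih =>
    obtain ⟨k, hk⟩ := ih (fun x hx => h (by simp [hx]))
    obtain ⟨i, hi⟩ := h (show a ∈ (↑(insert a t) : Set ℕ) by simp)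
    refine ⟨max k (i+1), Finset.insert_subset ?_ (hk.trans ?_)⟩
    · exact Finset.mem_image.2 ⟨i, Finset.mem_range.2 (lt_of_lt_of_le (Nat.lt_succ_self i) (le_max_right _ _)), hi⟩
    · exact Finset.image_subset_image (Finset.range_subset_range.2 (le_max_left _ _))

/-- Generic fusion lemma: construct points `c k` and decreasing sets `Bs k`
    satisfying all tasks indexed by previously chosen points. -/
lemma fuse {ι : Type} (B₀ : Set ℕ) (h₀ : B₀.Infinite) (tasks : Finset ℕ → Finset ι)
    (D : Set ℕ → ι → Prop)
    (mono : ∀ {B C : Set ℕ} {i}, D B i → C ⊆ B → D C i)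
    (dense : ∀ B : Set ℕ, B.Infinite → B ⊆ B₀ → ∀ (p : Finset ℕ) (i : ι), i ∈ tasks p →
        (∀ x ∈ p, ∀ b ∈ B, x < b) → ∃ C, C ⊆ B ∧ C.Infinite ∧ D C i) :
    ∃ (c : ℕ → ℕ) (Bs : ℕ → Set ℕ), StrictMono c ∧
      (∀ k, (Bs k).Infinite) ∧ (∀ k, Bs k ⊆ B₀) ∧ (∀ k, c k ∈ Bs k) ∧
      (∀ k l, k ≤ l → Bs l ⊆ Bs k) ∧
      (∀ k i, i ∈ tasks ((Finset.range k).image c) → D (Bs k) i) := by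
  classical
  -- finite shrink
  have shrink : ∀ (T : Finset ι) (p : Finset ℕ) (B : Set ℕ), B.Infinite → B ⊆ B₀ →
      (∀ x ∈ p, ∀ b ∈ B, x < b) → T ⊆ tasks p →
      ∃ C, C ⊆ B ∧ C.Infinite ∧ ∀ i ∈ T, D C i := by
    intro T
    induction T using Finset.induction_on with
    | empty => intro p B hB hB0 _ _; exact ⟨B, subset_rfl, hB, by simp⟩
    | @insert a T ha ih =>
      intro p B hB hB0 hbel hsub
      obtain ⟨C, hCB, hCinf, hCD⟩ := ih p B hB hB0 hbel (fun i hi => hsub (Finset.mem_insert_of_mem hi))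
      obtain ⟨C', hC'C, hC'inf, hC'D⟩ := dense C hCinf (hCB.trans hB0) p a
        (hsub (Finset.mem_insert_self a T)) (fun x hx b hb => hbel x hx b (hCB hb))
      exact ⟨C', hC'C.trans hCB, hC'inf, fun i hi => by
        rcases Finset.mem_insert.1 hi with rfl | hi
        · exact hC'D
        · exact mono (hCD i hi) hC'C⟩
  set Inv : Finset ℕ × Set ℕ → Prop := fun q =>
    q.2.Infinite ∧ q.2 ⊆ B₀ ∧ (∀ x ∈ q.1, ∀ b ∈ q.2, x < b) ∧ ∀ i ∈ tasks q.1, D q.2 i with hInvdef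
  set Rel : Finset ℕ × Set ℕ → Finset ℕ × Set ℕ → Prop := fun q r =>
    ∃ x, x ∈ q.2 ∧ r.1 = insert x q.1 ∧ r.2 ⊆ q.2 ∩ Set.Ioi x with hReldef
  have step_ex : ∀ q, Inv q → ∃ r, Inv r ∧ Rel q r := by
    rintro ⟨p, B⟩ ⟨hB, hB0, hbel, _⟩
    obtain ⟨x, hx⟩ := hB.nonempty
    have hB' : (B ∩ Set.Ioi x).Infinite := by
      have : B \ Set.Iic x = B ∩ Set.Ioi x := by ext y; simp [Set.mem_Ioi, Set.mem_Iic, not_le]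
      rw [← this]; exact hB.diff (Set.finite_Iic x)
    have hbel' : ∀ y ∈ insert x p, ∀ b ∈ B ∩ Set.Ioi x, y < b := by
      intro y hy b hb
      rcases Finset.mem_insert.1 hy with rfl | hy
      · exact hb.2
      · exact hbel y hy b hb.1
    obtain ⟨C, hCB, hCinf, hCD⟩ := shrink (tasks (insert x p)) (insert x p) (B ∩ Set.Ioi x)
      hB' ((Set.inter_subset_left).trans hB0) hbel' subset_rfl
    refine ⟨(insert x p, C), ⟨hCinf, (hCB.trans Set.inter_subset_left).trans hB0,
      fun y hy b hb => hbel' y hy b (hCB hb), hCD⟩, x, hx, rfl, hCB⟩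
  -- base state
  obtain ⟨C₀, hC₀B, hC₀inf, hC₀D⟩ := shrink (tasks ∅) ∅ B₀ h₀ subset_rfl (by simp) subset_rfl
  have hbase : Inv (∅, C₀) := ⟨hC₀inf, hC₀B, by simp, hC₀D⟩
  set stepF : Finset ℕ × Set ℕ → Finset ℕ × Set ℕ := fun q =>
    if h : Inv q then Classical.choose (step_ex q h) else q with hstepF
  set f : ℕ → Finset ℕ × Set ℕ := fun k => stepF^[k] (∅, C₀) with hfdef
  have hfs : ∀ k, f (k+1) = stepF (f k) := fun k => Function.iterate_succ_apply' stepF k _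
  have hInv : ∀ k, Inv (f k) := by
    intro k; induction k with
    | zero => exact hbase
    | succ k ih =>
      rw [hfs k, hstepF]; simp only [dif_pos ih]
      exact (Classical.choose_spec (step_ex (f k) ih)).1
  have hRel : ∀ k, Rel (f k) (f (k+1)) := by
    intro k
    have := hInv k
    rw [hfs k, hstepF]; simp only [dif_pos this]
    exact (Classical.choose_spec (step_ex (f k) this)).2
  set c : ℕ → ℕ := fun k => Classical.choose (hRel k) with hcdef
  have hc : ∀ k, c k ∈ (f k).2 ∧ (f (k+1)).1 = insert (c k) (f k).1 ∧
      (f (k+1)).2 ⊆ (f k).2 ∩ Set.Ioi (c k) := fun k => Classical.choose_spec (hRel k)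
  set Bs : ℕ → Set ℕ := fun k => (f k).2 with hBsdef
  have hpts : ∀ k, (f k).1 = (Finset.range k).image c := by
    intro k; induction k with
    | zero => simp [hfdef]
    | succ k ih =>
      rw [(hc k).2.1, ih, Finset.range_add_one, Finset.image_insert]
  have hanti1 : ∀ k, Bs (k+1) ⊆ Bs k := fun k => ((hc k).2.2).trans Set.inter_subset_left
  have hanti : ∀ k l, k ≤ l → Bs l ⊆ Bs k := by
    intro k l hkl
    induction l, hkl using Nat.le_induction with
    | base => exact subset_rfl
    | succ l _ ih => exact (hanti1 l).trans ih
  have hcmem : ∀ k, c k ∈ Bs k := fun k => (hc k).1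
  have hcmono : StrictMono c := by
    apply strictMono_nat_of_lt_succ
    intro k
    have := (hc k).2.2 (hcmem (k+1))
    exact this.2
  exact ⟨c, Bs, hcmono, fun k => (hInv k).1, fun k => (hInv k).2.1, hcmem, hanti,
    fun k i hi => (hInv k).2.2.2 i (by rwa [hpts k])⟩


/-- Pick an infinite `D ⊆ C` all whose finite subsets satisfy `P`, given that
bad one-point extensions are always finite. -/
lemma pick (C : Set ℕ) (hC : C.Infinite) (P : Finset ℕ → Prop) (hP0 : P ∅)
    (hbad : ∀ t : Finset ℕ, ↑t ⊆ C → P t →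
      {n | n ∈ C ∧ (∀ y ∈ t, y < n) ∧ ¬ P (insert n t)}.Finite) :
    ∃ D, D ⊆ C ∧ D.Infinite ∧ ∀ t : Finset ℕ, ↑t ⊆ D → P t := by
  classical
  set Inv : Finset ℕ → Prop := fun p => ↑p ⊆ C ∧ ∀ t ⊆ p, P t with hInvdef
  have step_ex : ∀ p, Inv p → ∃ n, n ∈ C ∧ (∀ y ∈ p, y < n) ∧ Inv (insert n p) := by
    intro p hp
    set bad : Set ℕ := ⋃ t ∈ p.powerset, {n | n ∈ C ∧ (∀ y ∈ (t : Finset ℕ), y < n) ∧ ¬ P (insert n t)}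
      with hbaddef
    have hbadfin : bad.Finite := Set.Finite.biUnion (p.powerset.finite_toSet)
      (fun t ht => hbad t ((Finset.coe_subset.2 (Finset.mem_powerset.1 ht)).trans hp.1)
        (hp.2 t (Finset.mem_powerset.1 ht)))
    have : (C \ bad).Infinite := hC.diff hbadfin
    obtain ⟨n, hn, hngt⟩ := this.exists_gt (p.sup id)
    refine ⟨n, hn.1, fun y hy => lt_of_le_of_lt (Finset.le_sup (f := id) hy) hngt, ?_, ?_⟩
    · rw [Finset.coe_insert]; exact Set.insert_subset hn.1 hp.1
    · intro t ht
      by_cases hnt : n ∈ t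
      · have htp : t.erase n ⊆ p := by
          intro x hx
          have := ht (Finset.mem_of_mem_erase hx)
          rcases Finset.mem_insert.1 this with rfl | h
          · exact absurd rfl (Finset.ne_of_mem_erase hx)
          · exact h
        have : ¬ (n ∈ C ∧ (∀ y ∈ t.erase n, y < n) ∧ ¬ P (insert n (t.erase n))) := by
          intro hmem
          exact hn.2 (Set.mem_biUnion (Finset.mem_coe.2 (Finset.mem_powerset.2 htp)) hmem)
        have hyn : ∀ y ∈ t.erase n, y < n := fun y hy =>
          lt_of_le_of_lt (Finset.le_sup (f := id) (htp hy)) hngt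
        have := not_and.1 this hn.1
        have := not_and.1 this hyn
        rw [not_not] at this
        rwa [Finset.insert_erase hnt] at this
      · exact hp.2 t (fun x hx => by
          rcases Finset.mem_insert.1 (ht hx) with rfl | h
          · exact absurd hx hnt
          · exact h)
  set stepF : Finset ℕ → Finset ℕ := fun p =>
    if h : Inv p then insert (Classical.choose (step_ex p h)) p else p with hstepF
  set f : ℕ → Finset ℕ := fun k => stepF^[k] ∅ with hfdef
  have hfs : ∀ k, f (k+1) = stepF (f k) := fun k => Function.iterate_succ_apply' stepF k _
  have hInv : ∀ k, Inv (f k) := by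
    intro k; induction k with
    | zero =>
      have h0 : f 0 = ∅ := rfl
      rw [h0]
      exact ⟨by simp, fun t ht => by rw [Finset.subset_empty.1 ht]; exact hP0⟩
    | succ k ih =>
      rw [hfs k, hstepF]; simp only [dif_pos ih]
      exact (Classical.choose_spec (step_ex (f k) ih)).2.2
  set c : ℕ → ℕ := fun k => Classical.choose (step_ex (f k) (hInv k)) with hcdef
  have hc : ∀ k, c k ∈ C ∧ (∀ y ∈ f k, y < c k) ∧ f (k+1) = insert (c k) (f k) := by
    intro k
    refine ⟨(Classical.choose_spec (step_ex (f k) (hInv k))).1,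
      (Classical.choose_spec (step_ex (f k) (hInv k))).2.1, ?_⟩
    rw [hfs k]; simp only [hstepF, hcdef, dif_pos (hInv k)]
  have hpts : ∀ k, f k = (Finset.range k).image c := by
    intro k; induction k with
    | zero => simp [hfdef]
    | succ k ih => rw [(hc k).2.2, ih, Finset.range_add_one, Finset.image_insert]
  have hcmono : StrictMono c := by
    apply strictMono_nat_of_lt_succ
    intro k
    apply (hc (k+1)).2.1
    rw [(hc k).2.2]; exact Finset.mem_insert_self _ _
  refine ⟨Set.range c, ?_, Set.infinite_range_of_injective hcmono.injective, ?_⟩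
  · rintro _ ⟨k, rfl⟩; exact (hc k).1
  · intro t ht
    obtain ⟨k, hk⟩ := finset_subset_image_range ht
    exact (hInv k).2 t (by rwa [hpts k])

def initseg (t : Finset ℕ) (Y : Set ℕ) : Prop :=
  ↑t ⊆ Y ∧ ∀ x ∈ Y, x ∉ t → ∀ y ∈ t, y < x

def hits (F : Finset ℕ → Prop) (s : Finset ℕ) (X : Set ℕ) : Prop :=
  ∃ t, initseg t (X \ ↑s) ∧ F t

def accepts (F : Finset ℕ → Prop) (s : Finset ℕ) (B : Set ℕ) (t : Finset ℕ) : Prop :=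
  ∀ X ∈ seg (s ∪ t) B, hits F s X

def rejects (F : Finset ℕ → Prop) (s : Finset ℕ) (B : Set ℕ) (t : Finset ℕ) : Prop :=
  ∀ C ⊆ B, C.Infinite → ¬ accepts F s C t

lemma accepts_mono {F s B t} (h : accepts F s B t) {C : Set ℕ} (hCB : C ⊆ B) :
    accepts F s C t := fun X hX => h X (seg_mono hCB hX)

lemma rejects_mono {F s B t} (h : rejects F s B t) {C : Set ℕ} (hCB : C ⊆ B) :
    rejects F s C t := fun C' hC' hC'inf => h C' (hC'.trans hCB) hC'inf

lemma exists_decided (F : Finset ℕ → Prop) (s t : Finset ℕ) (B : Set ℕ) (hB : B.Infinite) :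
    ∃ C, C ⊆ B ∧ C.Infinite ∧ (accepts F s C t ∨ rejects F s C t) := by
  by_cases h : rejects F s B t
  · exact ⟨B, subset_rfl, hB, Or.inr h⟩
  · unfold rejects at h; push_neg at h
    obtain ⟨C, hCB, hCinf, hCacc⟩ := h
    exact ⟨C, hCB, hCinf, Or.inl hCacc⟩

/-- Key combinatorial step: if `B` rejects `t`, only finitely many one-point
extensions of `t` are accepted by the corresponding tails. -/
lemma rejects_extend {F : Finset ℕ → Prop} {s : Finset ℕ} {B : Set ℕ} {t : Finset ℕ}
    (hrej : rejects F s B t) :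
    {n | n ∈ B ∧ accepts F s (B ∩ Set.Ioi n) (insert n t)}.Finite := by
  by_contra hfin
  apply hrej {n | n ∈ B ∧ accepts F s (B ∩ Set.Ioi n) (insert n t)} (fun n hn => hn.1) hfin
  intro X hX
  obtain ⟨hXinf, hsub, hrest⟩ := hX
  have hY : (X \ ↑(s ∪ t)).Infinite := hXinf.diff (Finset.finite_toSet _)
  set n := sInf (X \ ↑(s ∪ t)) with hndef
  have hnY : n ∈ X \ ↑(s ∪ t) := Nat.sInf_mem hY.nonempty
  have hnD : n ∈ {n | n ∈ B ∧ accepts F s (B ∩ Set.Ioi n) (insert n t)} :=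
    hrest n hnY.1 (fun h => hnY.2 h)
  apply hnD.2 X
  refine ⟨hXinf, ?_, ?_⟩
  · intro x hx
    rcases Finset.mem_coe.1 hx |> Finset.mem_union.1 with hxs | hxt
    · exact hsub (by simp [hxs])
    · rcases Finset.mem_insert.1 hxt with rfl | hxt
      · exact hnY.1
      · exact hsub (by simp [hxt])
  · intro x hx hxst
    have hxY : x ∈ X \ ↑(s ∪ t) := by
      refine ⟨hx, fun hmem => hxst ?_⟩
      rcases Finset.mem_coe.1 hmem |> Finset.mem_union.1 with h | h
      · simp [Finset.mem_union, h]
      · simp [Finset.mem_union, Finset.mem_insert, h]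
    have hxD := hrest x hx (fun h => hxY.2 h)
    have hne : x ≠ n := by
      rintro rfl
      apply hxst
      simp [Finset.mem_union, Finset.mem_insert]
    exact ⟨hxD.1, lt_of_le_of_ne (Nat.sInf_le hxY) (Ne.symm hne)⟩

/-- Galvin's lemma. -/
lemma galvin (F : Finset ℕ → Prop) (s : Finset ℕ) (B : Set ℕ) (hB : B.Infinite)
    (hsB : below s B) :
    ∃ C, C ⊆ B ∧ C.Infinite ∧
      ((∀ X ∈ seg s C, hits F s X) ∨ (∀ t : Finset ℕ, ↑t ⊆ C → ¬ F t)) := by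
  classical
  by_cases hrej : rejects F s B ∅
  case neg =>
    unfold rejects at hrej; push_neg at hrej
    obtain ⟨C, hCB, hCinf, hacc⟩ := hrej
    refine ⟨C, hCB, hCinf, Or.inl ?_⟩
    intro X hX
    exact hacc X (by rwa [Finset.union_empty])
  case pos =>
  obtain ⟨c, Bs, hcmono, hBsinf, hBsB, hcmem, hanti, hdec⟩ :=
    fuse B hB (fun p => p.powerset) (fun B' t => accepts F s B' t ∨ rejects F s B' t)
      (fun {B' C' t} h hC'B' => h.elim (fun h => Or.inl (accepts_mono h hC'B'))
        (fun h => Or.inr (rejects_mono h hC'B')))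
      (fun B' hB' _ _ t _ _ => exists_decided F s t B' hB')
  set C : Set ℕ := Set.range c with hCdef
  have hCB : C ⊆ B := by rintro _ ⟨k, rfl⟩; exact hBsB k (hcmem k)
  have hCinf : C.Infinite := Set.infinite_range_of_injective hcmono.injective
  -- the tail of C above a finite subset
  have habove_inf : ∀ t : Finset ℕ, {x ∈ C | ∀ y ∈ t, y < x}.Infinite := by
    intro t
    have h1 : (C \ Set.Iic (t.sup id)).Infinite := hCinf.diff (Set.finite_Iic _)
    exact h1.mono (fun x hx =>
      ⟨hx.1, fun y hy => lt_of_le_of_lt (Finset.le_sup (f := id) hy) (not_le.1 hx.2)⟩)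
  have tdec : ∀ t : Finset ℕ, ↑t ⊆ C → t.Nonempty →
      accepts F s {x ∈ C | ∀ y ∈ t, y < x} t ∨ rejects F s {x ∈ C | ∀ y ∈ t, y < x} t := by
    intro t htC hne
    obtain ⟨j, hj⟩ := htC (Finset.mem_coe.2 (t.max'_mem hne))
    have hsub : t ⊆ (Finset.range (j+1)).image c := by
      intro x hx
      obtain ⟨i, hi⟩ := htC (Finset.mem_coe.2 hx)
      have hle : c i ≤ c j := by rw [hi, hj]; exact t.le_max' x hx
      have : i ≤ j := hcmono.le_iff_le.1 hle
      exact Finset.mem_image.2 ⟨i, Finset.mem_range.2 (Nat.lt_succ_of_le this), hi⟩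
    have hdec' := hdec (j+1) t (Finset.mem_powerset.2 hsub)
    have habove : {x ∈ C | ∀ y ∈ t, y < x} ⊆ Bs (j+1) := by
      rintro x ⟨⟨i, rfl⟩, hgt⟩
      have h1 : c j < c i := by rw [hj]; exact hgt _ (t.max'_mem hne)
      have h2 : j < i := hcmono.lt_iff_lt.1 h1
      exact hanti (j+1) i h2 (hcmem i)
    rcases hdec' with ha | hr
    · exact Or.inl (accepts_mono ha habove)
    · exact Or.inr (rejects_mono hr habove)
  -- Phase B : pick a subset all of whose finite subsets are rejected
  have hP0 : rejects F s {x ∈ C | ∀ y ∈ (∅ : Finset ℕ), y < x} ∅ := by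
    have : {x ∈ C | ∀ y ∈ (∅ : Finset ℕ), y < x} = C := by ext x; simp
    rw [this]
    exact rejects_mono hrej hCB
  have hbad : ∀ t : Finset ℕ, ↑t ⊆ C → rejects F s {x ∈ C | ∀ y ∈ t, y < x} t →
      {n | n ∈ C ∧ (∀ y ∈ t, y < n) ∧ ¬ rejects F s {x ∈ C | ∀ y ∈ insert n t, y < x} (insert n t)}.Finite := by
    intro t htC hPt
    apply Set.Finite.subset (rejects_extend hPt)
    intro n hn
    obtain ⟨hnC, hngt, hnP⟩ := hn
    have hins : ↑(insert n t) ⊆ C := by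
      rw [Finset.coe_insert]; exact Set.insert_subset hnC htC
    have heq : {x ∈ C | ∀ y ∈ insert n t, y < x} = {x ∈ C | ∀ y ∈ t, y < x} ∩ Set.Ioi n := by
      ext x
      simp only [Set.mem_setOf_eq, Set.mem_inter_iff, Set.mem_Ioi, Finset.mem_insert]
      constructor
      · intro ⟨h1, h2⟩; exact ⟨⟨h1, fun y hy => h2 y (Or.inr hy)⟩, h2 n (Or.inl rfl)⟩
      · rintro ⟨⟨h1, h2⟩, h3⟩; exact ⟨h1, fun y hy => hy.elim (fun h => h ▸ h3) (h2 y)⟩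
    have := tdec (insert n t) hins (Finset.insert_nonempty n t)
    rw [heq] at this
    rcases this with ha | hr
    · exact ⟨⟨hnC, hngt⟩, ha⟩
    · exact absurd (heq ▸ hr) (by rw [heq] at hnP ⊢; exact fun h => hnP (heq ▸ h))
  obtain ⟨D, hDC, hDinf, hDP⟩ := pick C hCinf
    (fun t => rejects F s {x ∈ C | ∀ y ∈ t, y < x} t) hP0 hbad
  refine ⟨D, hDC.trans hCB, hDinf, Or.inr ?_⟩
  intro t htD hFt
  have hPt := hDP t htD
  apply hPt {x ∈ C | ∀ y ∈ t, y < x} subset_rfl (habove_inf t)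
  intro X hX
  obtain ⟨hXinf, hsub, hrest⟩ := hX
  refine ⟨t, ⟨?_, ?_⟩, hFt⟩
  · intro y hy
    have hyB : y ∈ B := hCB (hDC (htD hy))
    refine ⟨hsub (by simp [Finset.mem_union, Finset.mem_coe.1 hy]), fun hys => ?_⟩
    exact lt_irrefl y (hsB y hys y hyB)
  · intro x hx hxt y hy
    have hxE : x ∈ {x ∈ C | ∀ y ∈ t, y < x} := by
      apply hrest x hx.1
      intro hmem
      rcases Finset.mem_coe.1 hmem |> Finset.mem_union.1 with h | h
      · exact hx.2 (by simp [h])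
      · exact hxt h
    exact hxE.2 y hy

lemma CR_compl {A A' : Set (Set ℕ)} (h : CR A)
    (h' : ∀ X : Set ℕ, X.Infinite → (X ∈ A' ↔ X ∉ A)) : CR A' := by
  intro s B hB hsB
  obtain ⟨C, h1, h2, h3⟩ := h s B hB hsB
  refine ⟨C, h1, h2, ?_⟩
  rcases h3 with h3 | h3
  · right
    rw [Set.eq_empty_iff_forall_notMem]
    rintro X ⟨hX, hX'⟩
    exact ((h' X hX.1).1 hX') (h3 hX)
  · left
    intro X hX
    refine (h' X hX.1).2 (fun hXA => ?_)
    rw [Set.eq_empty_iff_forall_notMem] at h3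
    exact h3 X ⟨hX, hXA⟩

lemma CR_iUnion (A : ℕ → Set (Set ℕ)) (h : ∀ n, CR (A n)) : CR (⋃ n, A n) := by
  classical
  intro s B hB hsB
  obtain ⟨c, Bs, hcmono, hBsinf, hBsB, hcmem, hanti, hdec⟩ :=
    fuse B hB (fun p => p.powerset ×ˢ Finset.range p.card)
      (fun B' q => seg (s ∪ q.1) B' ⊆ A q.2 ∨ seg (s ∪ q.1) B' ∩ A q.2 = ∅)
      (by
        rintro B' C' ⟨t, n⟩ hd hC'B'
        rcases hd with hd | hd
        · exact Or.inl ((seg_mono hC'B').trans hd)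
        · refine Or.inr (Set.eq_empty_iff_forall_notMem.2 fun X hX => ?_)
          rw [Set.eq_empty_iff_forall_notMem] at hd
          exact hd X ⟨seg_mono hC'B' hX.1, hX.2⟩)
      (by
        rintro B' hB' hB'B p ⟨t, n⟩ hq hbel
        have htp : t ⊆ p := Finset.mem_powerset.1 (Finset.mem_product.1 hq).1
        have hbel' : below (s ∪ t) B' := by
          intro a ha b hb
          rcases Finset.mem_union.1 ha with ha | ha
          · exact hsB a ha b (hB'B hb)
          · exact hbel a (htp ha) b hb
        obtain ⟨C, h1, h2, h3⟩ := h n (s ∪ t) B' hB' hbel'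
        exact ⟨C, h1, h2, h3⟩)
  set C : Set ℕ := Set.range c with hCdef
  have hCB : C ⊆ B := by rintro _ ⟨k, rfl⟩; exact hBsB k (hcmem k)
  have hCinf : C.Infinite := Set.infinite_range_of_injective hcmono.injective
  have hcard : ∀ k, ((Finset.range k).image c).card = k := by
    intro k
    rw [Finset.card_image_of_injective _ hcmono.injective, Finset.card_range]
  set F : Finset ℕ → Prop := fun t =>
    ∃ n j, n ≤ j ∧ c j ∈ t ∧ (∀ y ∈ t, y ≤ c j) ∧ seg (s ∪ t) (Bs (j+1)) ⊆ A n with hFdef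
  -- a point of X∖s above c j lies in Bs (j+1)
  have hloc : ∀ (X : Set ℕ), X ∈ seg s C → ∀ j, ∀ x ∈ X, x ∉ s → c j < x → x ∈ Bs (j+1) := by
    intro X hX j x hx hxs hgt
    obtain ⟨i, rfl⟩ := hX.2.2 x hx hxs
    exact hanti (j+1) i (hcmono.lt_iff_lt.1 hgt) (hcmem i)
  have key1 : ∀ X ∈ seg s C, hits F s X → X ∈ ⋃ n, A n := by
    rintro X hX ⟨t, ⟨hts, hinit⟩, n, j, hnj, hcjt, hmax, hsegsub⟩
    refine Set.mem_iUnion.2 ⟨n, hsegsub ⟨hX.1, ?_, ?_⟩⟩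
    · intro x hx
      rcases Finset.mem_coe.1 hx |> Finset.mem_union.1 with h' | h'
      · exact hX.2.1 (by simp [h'])
      · exact (hts h').1
    · intro x hx hxst
      have hxs : x ∉ s := fun h' => hxst (by simp [Finset.mem_union, h'])
      have hxt : x ∉ t := fun h' => hxst (by simp [Finset.mem_union, h'])
      have : c j < x := hinit x ⟨hx, hxs⟩ hxt (c j) hcjt
      exact hloc X hX j x hx hxs this
  have key2 : ∀ X ∈ seg s C, ∀ n, X ∈ A n → ∃ t : Finset ℕ, ↑t ⊆ X \ ↑s ∧
      initseg t (X \ ↑s) ∧ F t := by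
    intro X hX n hXA
    have hXs : (X \ ↑s).Infinite := hX.1.diff (Finset.finite_toSet s)
    have hXsC : X \ ↑s ⊆ C := fun x hx => hX.2.2 x hx.1 hx.2
    have hpre : (c ⁻¹' (X \ ↑s)).Infinite := by
      apply Set.Infinite.preimage hXs
      intro x hx; exact hXsC hx
    obtain ⟨j, hjmem, hjn⟩ := hpre.exists_gt n
    have hcj : c j ∈ X \ ↑s := hjmem
    have htfin : ((X \ ↑s) ∩ Set.Iic (c j)).Finite := (Set.finite_Iic (c j)).inter_of_right _
    set t : Finset ℕ := htfin.toFinset with htdef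
    have htco : ↑t = (X \ ↑s) ∩ Set.Iic (c j) := htfin.coe_toFinset
    have hts : ↑t ⊆ X \ ↑s := by rw [htco]; exact Set.inter_subset_left
    have hcjt : c j ∈ t := by
      rw [← Finset.mem_coe, htco]; exact ⟨hcj, Set.mem_Iic.2 le_rfl⟩
    have hmax : ∀ y ∈ t, y ≤ c j := by
      intro y hy
      have := (htco ▸ Finset.mem_coe.2 hy).2
      exact this
    have hinit : initseg t (X \ ↑s) := by
      refine ⟨hts, fun x hx hxt y hy => ?_⟩
      have hxgt : c j < x := by
        by_contra hle
        exact hxt (by rw [← Finset.mem_coe, htco]; exact ⟨hx, not_lt.1 hle⟩)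
      exact lt_of_le_of_lt (hmax y hy) hxgt
    have hXseg : X ∈ seg (s ∪ t) (Bs (j+1)) := by
      refine ⟨hX.1, ?_, ?_⟩
      · intro x hx
        rcases Finset.mem_coe.1 hx |> Finset.mem_union.1 with h' | h'
        · exact hX.2.1 (by simp [h'])
        · exact (hts h').1
      · intro x hx hxst
        have hxs : x ∉ s := fun h' => hxst (by simp [Finset.mem_union, h'])
        have hxt : x ∉ t := fun h' => hxst (by simp [Finset.mem_union, h'])
        have hxgt : c j < x := hinit.2 x ⟨hx, hxs⟩ hxt (c j) hcjt
        exact hloc X hX j x hx hxs hxgt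
    have htask : (t, n) ∈ ((Finset.range (j+1)).image c).powerset ×ˢ
        Finset.range ((Finset.range (j+1)).image c).card := by
      rw [Finset.mem_product]
      constructor
      · rw [Finset.mem_powerset]
        intro x hx
        obtain ⟨i, rfl⟩ := hXsC (hts hx)
        have : i ≤ j := hcmono.le_iff_le.1 (hmax _ hx)
        exact Finset.mem_image.2 ⟨i, Finset.mem_range.2 (Nat.lt_succ_of_le this), rfl⟩
      · rw [hcard, Finset.mem_range]
        exact Nat.lt_succ_of_le (le_of_lt hjn)
    have hd := hdec (j+1) (t, n) htask
    rcases hd with hd | hd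
    · exact ⟨t, hts, hinit, n, j, le_of_lt hjn, hcjt, hmax, hd⟩
    · exfalso
      rw [Set.eq_empty_iff_forall_notMem] at hd
      exact hd X ⟨hXseg, hXA⟩
  have hsC : below s C := fun a ha b hb => hsB a ha b (hCB hb)
  obtain ⟨C', hC'C, hC'inf, hgal⟩ := galvin F s C hCinf hsC
  refine ⟨C', hC'C.trans hCB, hC'inf, ?_⟩
  rcases hgal with hg | hg
  · left
    intro X hX
    exact key1 X (seg_mono hC'C hX) (hg X hX)
  · right
    rw [Set.eq_empty_iff_forall_notMem]
    rintro X ⟨hX, hXU⟩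
    obtain ⟨n, hXA⟩ := Set.mem_iUnion.1 hXU
    obtain ⟨t, hts, _, hFt⟩ := key2 X (seg_mono hC'C hX) n hXA
    exact hg t (hts.trans (fun x hx => hX.2.2 x hx.1 hx.2)) hFt

/-! ### Bridge to `Nat.nth` and measurability -/

lemma setOf_infinite {X : Set ℕ} (h : X.Infinite) : (setOf (· ∈ X)).Infinite := by
  exact h

lemma nth_range_strictMono (g : ℕ → ℕ) (hg : StrictMono g) (k : ℕ) :
    Nat.nth (· ∈ Set.range g) k = g k := by
  classical
  have hinf : (setOf (· ∈ Set.range g)).Infinite :=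
    setOf_infinite (Set.infinite_range_of_injective hg.injective)
  have hcount : Nat.count (· ∈ Set.range g) (g k) = k := by
    rw [Nat.count_eq_card_filter_range]
    have : (Finset.range (g k)).filter (· ∈ Set.range g) = (Finset.range k).image g := by
      ext m
      simp only [Finset.mem_filter, Finset.mem_range, Finset.mem_image, Set.mem_range]
      constructor
      · rintro ⟨hlt, i, rfl⟩
        exact ⟨i, hg.lt_iff_lt.1 hlt, rfl⟩
      · rintro ⟨i, hik, rfl⟩
        exact ⟨hg hik, i, rfl⟩
    rw [this, Finset.card_image_of_injective _ hg.injective, Finset.card_range]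
  have := Nat.nth_count (p := (· ∈ Set.range g)) (n := g k) ⟨k, rfl⟩
  rwa [hcount] at this

lemma nth_seg_lt {s : Finset ℕ} {C X : Set ℕ} (hsC : below s C) (hX : X ∈ seg s C) :
    (∀ k (hk : k < s.card), Nat.nth (· ∈ X) k = s.orderEmbOfFin rfl ⟨k, hk⟩) ∧
    (∀ k, s.card ≤ k → Nat.nth (· ∈ X) k ∉ s) := by
  classical
  have hXinf : (setOf (· ∈ X)).Infinite := setOf_infinite hX.1
  have hmem : ∀ k, Nat.nth (· ∈ X) k ∈ X := Nat.nth_mem_of_infinite hXinf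
  have hcnt : ∀ k, Nat.count (· ∈ X) (Nat.nth (· ∈ X) k) = k :=
    Nat.count_nth_of_infinite hXinf
  have hin : ∀ k, k < s.card → Nat.nth (· ∈ X) k ∈ s := by
    intro k hk
    by_contra hns
    have hgt : ∀ y ∈ s, y < Nat.nth (· ∈ X) k :=
      fun y hy => hsC y hy _ (hX.2.2 _ (hmem k) hns)
    have : s ⊆ (Finset.range (Nat.nth (· ∈ X) k)).filter (· ∈ X) := by
      intro y hy
      exact Finset.mem_filter.2 ⟨Finset.mem_range.2 (hgt y hy), hX.2.1 (Finset.mem_coe.2 hy)⟩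
    have hcard := Finset.card_le_card this
    rw [← Nat.count_eq_card_filter_range, hcnt k] at hcard
    omega
  constructor
  · have hf : ∀ i : Fin s.card, (fun i : Fin s.card => Nat.nth (· ∈ X) i) i ∈ s :=
      fun i => hin i i.2
    have hmono : StrictMono (fun i : Fin s.card => Nat.nth (· ∈ X) (i : ℕ)) :=
      fun i j hij => Nat.nth_strictMono hXinf hij
    have := Finset.orderEmbOfFin_unique rfl hf hmono
    intro k hk
    exact congrFun this ⟨k, hk⟩
  · intro k hk hmem'
    have hlt : ∀ m ∈ (Finset.range (Nat.nth (· ∈ X) k)).filter (· ∈ X), m ∈ s.erase (Nat.nth (· ∈ X) k) := by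
      intro m hm
      obtain ⟨hmr, hmX⟩ := Finset.mem_filter.1 hm
      rw [Finset.mem_range] at hmr
      have hms : m ∈ s := by
        by_contra hns
        have := hsC _ hmem' _ (hX.2.2 m hmX hns)
        omega
      exact Finset.mem_erase.2 ⟨by omega, hms⟩
    have hcard := Finset.card_le_card hlt
    rw [← Nat.count_eq_card_filter_range, hcnt k, Finset.card_erase_of_mem hmem'] at hcard
    have hpos : 0 < s.card := Finset.card_pos.2 ⟨_, hmem'⟩
    omega

lemma CR_cyl (k m : ℕ) : CR {X : Set ℕ | X.Infinite ∧ Nat.nth (· ∈ X) k = m} := by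
  intro s B hB hsB
  by_cases hk : k < s.card
  · by_cases hm : (s.orderEmbOfFin rfl ⟨k, hk⟩ : ℕ) = m
    · refine ⟨B, subset_rfl, hB, Or.inl fun X hX => ⟨hX.1, ?_⟩⟩
      rw [(nth_seg_lt hsB hX).1 k hk, hm]
    · refine ⟨B, subset_rfl, hB, Or.inr ?_⟩
      rw [Set.eq_empty_iff_forall_notMem]
      rintro X ⟨hX, _, hXm⟩
      rw [(nth_seg_lt hsB hX).1 k hk] at hXm
      exact hm hXm
  · push_neg at hk
    have hsub : B \ {m} ⊆ B := Set.diff_subset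
    refine ⟨B \ {m}, hsub, hB.diff (Set.finite_singleton m), Or.inr ?_⟩
    rw [Set.eq_empty_iff_forall_notMem]
    rintro X ⟨hX, _, hXm⟩
    have hbel : below s (B \ {m}) := fun a ha b hb => hsB a ha b (hsub hb)
    have h1 : Nat.nth (· ∈ X) k ∉ s := (nth_seg_lt hbel hX).2 k hk
    have h2 : Nat.nth (· ∈ X) k ∈ X :=
      Nat.nth_mem_of_infinite (setOf_infinite hX.1) k
    have := hX.2.2 _ h2 h1
    exact this.2 (by rw [hXm]; rfl)

/-- The lift of a set of Baire-space points to sets of naturals. -/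
def lift (T : Set (ℕ → ℕ)) : Set (Set ℕ) :=
  {X | X.Infinite ∧ (fun k => Nat.nth (· ∈ X) k) ∈ T}

lemma CR_of_measurable (T : Set (ℕ → ℕ)) (hT : MeasurableSet T) : CR (lift T) := by
  classical
  set m' : MeasurableSpace (ℕ → ℕ) :=
    { MeasurableSet' := fun T => CR (lift T)
      measurableSet_empty := by
        intro s B hB hsB
        refine ⟨B, subset_rfl, hB, Or.inr ?_⟩
        rw [Set.eq_empty_iff_forall_notMem]
        rintro X ⟨_, _, hX⟩
        exact hX
      measurableSet_compl := by
        intro T hT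
        refine CR_compl hT (fun X hX => ?_)
        simp only [lift, Set.mem_setOf_eq, Set.mem_compl_iff]
        constructor
        · rintro ⟨_, h⟩ ⟨_, h'⟩; exact h h'
        · intro h; exact ⟨hX, fun h' => h ⟨hX, h'⟩⟩
      measurableSet_iUnion := by
        intro f hf
        have : lift (⋃ n, f n) = ⋃ n, lift (f n) := by
          ext X
          simp only [lift, Set.mem_setOf_eq, Set.mem_iUnion]
          constructor
          · rintro ⟨h1, n, h2⟩; exact ⟨n, h1, h2⟩
          · rintro ⟨n, h1, h2⟩; exact ⟨h1, n, h2⟩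
        rw [this]
        exact CR_iUnion _ hf } with hm'
  have hle : (MeasurableSpace.pi : MeasurableSpace (ℕ → ℕ)) ≤ m' := by
    rw [MeasurableSpace.pi]
    apply iSup_le
    intro k
    rw [MeasurableSpace.le_def]
    intro T hT
    obtain ⟨S, _, rfl⟩ := MeasurableSpace.measurableSet_comap.1 hT
    have heq : (fun g : ℕ → ℕ => g k) ⁻¹' S = ⋃ m ∈ S, {g : ℕ → ℕ | g k = m} := by
      ext g; simp [Set.mem_preimage]
    rw [heq]
    have hcount : (S : Set ℕ).Countable := Set.to_countable S
    refine MeasurableSet.biUnion (m := m') hcount (fun m _ => ?_)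
    show CR (lift {g : ℕ → ℕ | g k = m})
    have : lift {g : ℕ → ℕ | g k = m} = {X : Set ℕ | X.Infinite ∧ Nat.nth (· ∈ X) k = m} := rfl
    rw [this]
    exact CR_cyl k m
  exact hle T hT

end GP
namespace GP

/-- The increasing enumeration of an infinite set, as an element of `InfSub`. -/
noncomputable def enum (X : Set ℕ) (h : X.Infinite) : InfSub :=
  ⟨fun k => Nat.nth (· ∈ X) k, fun _ _ hij => Nat.nth_strictMono (setOf_infinite h) hij⟩

lemma shiftS_ne (X : InfSub) : X ≠ shiftS X := by
  intro h
  have h0 : X.1 0 = (shiftS X).1 0 := by rw [← h]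
  have : X.1 0 < X.1 1 := X.2 Nat.zero_lt_one
  exact absurd h0 (ne_of_lt this)

lemma no_finite_coloring (n : ℕ) (c : InfSub → Fin n) (hc : Measurable c)
    (hcol : ∀ X Y : InfSub, shiftAdj X Y → c X ≠ c Y) : False := by
  classical
  -- measurable color classes, pulled back to the Baire space
  have hA : ∀ i : Fin n, ∃ T : Set (ℕ → ℕ), MeasurableSet T ∧
      Subtype.val ⁻¹' T = c ⁻¹' {i} := by
    intro i
    have : MeasurableSet (c ⁻¹' {i}) := hc (measurableSet_singleton i)
    exact MeasurableSpace.measurableSet_comap.1 this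
  choose T hTmeas hTpre using hA
  have hCR : ∀ i : Fin n, CR (lift (T i)) := fun i => CR_of_measurable (T i) (hTmeas i)
  -- membership translation
  have hmem : ∀ (X : Set ℕ) (h : X.Infinite) (i : Fin n),
      X ∈ lift (T i) ↔ c (enum X h) = i := by
    intro X h i
    constructor
    · intro hX
      have : (enum X h).1 ∈ T i := hX.2
      have : enum X h ∈ Subtype.val ⁻¹' T i := this
      rw [hTpre i] at this
      exact this
    · intro hci
      refine ⟨h, ?_⟩
      have : enum X h ∈ c ⁻¹' {i} := by simp [hci]
      rw [← hTpre i] at this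
      exact this
  -- find a monochromatic infinite set
  have iter : ∀ m : ℕ,
      (∃ C : Set ℕ, C.Infinite ∧ ∃ i : Fin n, seg ∅ C ⊆ lift (T i)) ∨
      (∃ C : Set ℕ, C.Infinite ∧ ∀ i : Fin n, (i : ℕ) < m → seg ∅ C ∩ lift (T i) = ∅) := by
    intro m
    induction m with
    | zero => exact Or.inr ⟨Set.univ, Set.infinite_univ, fun i hi => by omega⟩
    | succ m ih =>
      rcases ih with h | ⟨C, hCinf, hC⟩
      · exact Or.inl h
      by_cases hm : m < n
      · obtain ⟨C', hC'C, hC'inf, hdich⟩ := hCR ⟨m, hm⟩ ∅ C hCinf (by simp [below])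
        rcases hdich with hd | hd
        · exact Or.inl ⟨C', hC'inf, ⟨m, hm⟩, hd⟩
        · refine Or.inr ⟨C', hC'inf, fun i hi => ?_⟩
          rcases Nat.lt_succ_iff_lt_or_eq.1 hi with hi' | hi'
          · rw [Set.eq_empty_iff_forall_notMem]
            rintro X ⟨h1, h2⟩
            have := hC i hi'
            rw [Set.eq_empty_iff_forall_notMem] at this
            exact this X ⟨seg_mono hC'C h1, h2⟩
          · have : i = ⟨m, hm⟩ := Fin.ext hi'
            rwa [this]
      · refine Or.inr ⟨C, hCinf, fun i hi => hC i ?_⟩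
        have := i.2
        omega
  rcases iter n with ⟨C, hCinf, i, hmono⟩ | ⟨C, hCinf, hC⟩
  · -- monochromatic set: the shift has the same color, contradiction
    have hCseg : C ∈ seg ∅ C := ⟨hCinf, by simp, fun x hx _ => hx⟩
    set X : InfSub := enum C hCinf with hXdef
    have hcX : c X = i := (hmem C hCinf i).1 (hmono hCseg)
    set Y : InfSub := shiftS X with hYdef
    have hYval : ∀ k, Y.1 k = Nat.nth (· ∈ C) (k + 1) := fun k => rfl
    have hRsub : Set.range Y.1 ⊆ C := by
      rintro _ ⟨k, rfl⟩
      rw [hYval k]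
      exact Nat.nth_mem_of_infinite (setOf_infinite hCinf) (k + 1)
    have hRinf : (Set.range Y.1).Infinite :=
      Set.infinite_range_of_injective Y.2.injective
    have hRseg : Set.range Y.1 ∈ seg ∅ C := ⟨hRinf, by simp, fun x hx _ => hRsub hx⟩
    have henumR : enum (Set.range Y.1) hRinf = Y := by
      apply Subtype.ext
      funext k
      exact nth_range_strictMono Y.1 Y.2 k
    have hcY : c Y = i := by
      have := (hmem (Set.range Y.1) hRinf i).1 (hmono hRseg)
      rwa [henumR] at this
    exact hcol X Y ⟨shiftS_ne X, Or.inl rfl⟩ (hcX.trans hcY.symm)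
  · -- impossible: C itself has some color
    have hCseg : C ∈ seg ∅ C := ⟨hCinf, by simp, fun x hx _ => hx⟩
    set i : Fin n := c (enum C hCinf) with hidef
    have : C ∈ lift (T i) := (hmem C hCinf i).2 rfl
    have h2 := hC i i.2
    rw [Set.eq_empty_iff_forall_notMem] at h2
    exact h2 C ⟨hCseg, this⟩

end GP

/-- the Borel chromatic number of the shift graph is exactly ℵ₀:
there is a Borel coloring with countably many colors, but no Borel coloring
with finitely many colors. -/
theorem shiftGraph_borel_chromatic_aleph0 :
    (∃ c : InfSub → ℕ, Measurable c ∧ ∀ X Y : InfSub, shiftAdj X Y → c X ≠ c Y) ∧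
    (∀ (n : ℕ) (c : InfSub → Fin n), Measurable c →
      ¬ (∀ X Y : InfSub, shiftAdj X Y → c X ≠ c Y)) := by
  constructor
  · refine ⟨fun X => X.1 0, ?_, ?_⟩
    · exact (measurable_pi_apply 0).comp measurable_subtype_coe
    · rintro X Y ⟨hne, h | h⟩
      · rw [← h]
        have : X.1 0 < X.1 1 := X.2 Nat.zero_lt_one
        exact (ne_of_lt this)
      · rw [← h]
        have : Y.1 0 < Y.1 1 := Y.2 Nat.zero_lt_one
        exact (ne_of_lt this).symm
  · intro n c hc hcol
    exact GP.no_finite_coloring n c hc hcol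
end

section
/- If there is a continuous homomorphism φ from the directed shift graph D_S to (ω,P), where P is an irreflexive binary relation on ω, then there exists Y∈[ω]^ω such that the restriction of φ to [Y]^ω satisfies φ(X) < φ(S(X)) for all infinite X⊆Y. -/
namespace GPaux

/-- enumeration of an infinite set -/
noncomputable def enum (A : Set ℕ) (hA : A.Infinite) : InfSub :=
  ⟨Nat.nth (· ∈ A), Nat.nth_strictMono hA⟩

lemma range_enum (A : Set ℕ) (hA : A.Infinite) : Set.range (enum A hA).1 = A :=
  Nat.range_nth_of_infinite hA

lemma enum_range (X : InfSub) (h : (Set.range X.1).Infinite) : enum (Set.range X.1) h = X := by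
  apply Subtype.ext
  exact ((Nat.nth_strictMono h).range_inj X.2).1 (range_enum _ h)

lemma infinite_range (X : InfSub) : (Set.range X.1).Infinite :=
  Set.infinite_range_of_injective X.2.injective

/-- local constancy of a continuous map to ℕ -/
lemma loc_const (ψ : InfSub → ℕ) (hc : Continuous ψ) (X : InfSub) :
    ∃ n, ∀ X' : InfSub, (∀ i ≤ n, X'.1 i = X.1 i) → ψ X' = ψ X := by
  have hU : (ψ ⁻¹' {ψ X}) ∈ nhds X :=
    (hc.isOpen_preimage _ (isOpen_discrete _)).mem_nhds rfl
  rw [nhds_subtype_eq_comap, Filter.mem_comap] at hU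
  obtain ⟨V, hV, hVsub⟩ := hU
  rw [nhds_pi, Filter.mem_pi] at hV
  obtain ⟨I, hIfin, t, ht, hpi⟩ := hV
  obtain ⟨n, hn⟩ := hIfin.bddAbove
  refine ⟨n, fun X' hX' => ?_⟩
  have : X'.1 ∈ Set.pi I t := by
    intro i hi
    rw [hX' i (hn hi)]
    have := ht i
    rwa [nhds_discrete, Filter.mem_pure] at this
  exact hVsub (hpi this)

end GPaux

namespace GPaux

variable (φ : InfSub → ℕ)

/-- `Bad A` : the value drops at the first step for the set `A`. -/
def Bad (A : Set ℕ) (hA : A.Infinite) : Prop :=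
  φ (shiftS (enum A hA)) < φ (enum A hA)

lemma Bad_congr {A B : Set ℕ} (h : A = B) {hA : A.Infinite} {hB : B.Infinite}
    (hb : Bad φ A hA) : Bad φ B hB := by subst h; exact hb

/-- `Y` accepts `s` : every infinite subset of `Y` lying above `s`, together with `s`,
is bad. -/
def Accepts (Y : Set ℕ) (s : Finset ℕ) : Prop :=
  ∀ A ⊆ Y, (∀ m ∈ s, ∀ k ∈ A, m < k) → ∀ hA : A.Infinite,
    Bad φ (↑s ∪ A) (hA.mono Set.subset_union_right)

/-- `Y` rejects `s` : no infinite subset of `Y` accepts `s`. -/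
def Rejects (Y : Set ℕ) (s : Finset ℕ) : Prop :=
  ∀ Z ⊆ Y, Z.Infinite → ¬ Accepts φ Z s

variable {φ}

lemma Accepts.mono {Y Z : Set ℕ} {s : Finset ℕ} (h : Accepts φ Y s) (hZY : Z ⊆ Y) :
    Accepts φ Z s := fun A hA => h A (hA.trans hZY)

lemma Rejects.mono {Y Z : Set ℕ} {s : Finset ℕ} (h : Rejects φ Y s) (hZY : Z ⊆ Y) :
    Rejects φ Z s := fun W hW => h W (hW.trans hZY)

lemma no_strict_anti (f : ℕ → ℕ) (h : ∀ n, f (n + 1) < f n) : False := by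
  have key : ∀ n, f n + n ≤ f 0 := by
    intro n
    induction n with
    | zero => simp
    | succ n ih => have := h n; omega
  have := key (f 0 + 1); omega

/-- The full set rejects the empty set (otherwise an infinite descending chain in ℕ). -/
lemma rejects_univ_empty : Rejects φ Set.univ ∅ := by
  intro Z _ hZ hacc
  -- iterate the shift on `enum Z`
  set X0 : InfSub := enum Z hZ with hX0
  have hrange : ∀ n, Set.range (shiftS^[n] X0).1 ⊆ Z := by
    intro n
    induction n with
    | zero =>
      rw [Function.iterate_zero_apply, hX0, range_enum]
    | succ n ih =>
      rw [Function.iterate_succ_apply']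
      rintro _ ⟨i, rfl⟩
      exact ih ⟨i + 1, rfl⟩
  have hbad : ∀ n, φ (shiftS (shiftS^[n] X0)) < φ (shiftS^[n] X0) := by
    intro n
    set X := shiftS^[n] X0
    have h1 := hacc (Set.range X.1) (hrange n) (by simp) (infinite_range X)
    have h2 : Bad φ (Set.range X.1) (infinite_range X) := by
      refine Bad_congr (φ := φ) (by simp) h1
    unfold Bad at h2
    rwa [enum_range] at h2
  refine no_strict_anti (fun n => φ (shiftS^[n] X0)) (fun n => ?_)
  show φ (shiftS^[n+1] X0) < φ (shiftS^[n] X0)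
  rw [Function.iterate_succ_apply']
  exact hbad n

end GPaux

namespace GPaux

lemma enum_mem (A : Set ℕ) (hA : A.Infinite) (k : ℕ) : (enum A hA).1 k ∈ A := by
  have h := Set.mem_range_self (f := (enum A hA).1) k
  rwa [range_enum] at h

lemma continuous_shiftS : Continuous shiftS := by
  apply Continuous.subtype_mk
  exact continuous_pi fun n => (continuous_apply (n + 1)).comp continuous_subtype_val

variable {φ : InfSub → ℕ}

lemma accepts_of_bad (hφc : Continuous φ) {Z : Set ℕ} (X : InfSub)
    (hXZ : Set.range X.1 ⊆ Z) (hbad : φ (shiftS X) < φ X) :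
    ∃ s : Finset ℕ, ↑s ⊆ Z ∧ Accepts φ Z s := by
  obtain ⟨n1, h1⟩ := loc_const φ hφc X
  obtain ⟨n2, h2⟩ := loc_const (fun W => φ (shiftS W)) (hφc.comp continuous_shiftS) X
  set n := max n1 n2 with hn
  set s : Finset ℕ := (Finset.range (n + 1)).image X.1 with hs
  refine ⟨s, ?_, ?_⟩
  · intro m hm
    simp only [hs, Finset.coe_image, Set.mem_image, Finset.coe_range, Set.mem_Iio] at hm
    obtain ⟨i, _, rfl⟩ := hm
    exact hXZ ⟨i, rfl⟩
  · intro A hAZ habove hA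
    have hXmem : ∀ i ≤ n, X.1 i ∈ s := by
      intro i hi
      simp only [hs, Finset.mem_image, Finset.mem_range]
      exact ⟨i, by omega, rfl⟩
    have hXn : ∀ k ∈ A, X.1 n < k := fun k hk => habove _ (hXmem n le_rfl) k hk
    set g : ℕ → ℕ := fun i => if i ≤ n then X.1 i else (enum A hA).1 (i - (n + 1)) with hg
    have hgmono : StrictMono g := by
      intro i j hij
      simp only [hg]
      split_ifs with h h' h'
      · exact X.2 hij
      · exact lt_of_le_of_lt (X.2.monotone h) (hXn _ (enum_mem A hA _))
      · omega
      · exact (enum A hA).2 (by omega)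
    have hrange : Set.range g = ↑s ∪ A := by
      ext m
      constructor
      · rintro ⟨i, rfl⟩
        simp only [hg]
        split_ifs with h
        · exact Or.inl (hXmem i h)
        · exact Or.inr (enum_mem A hA _)
      · rintro (hm | hm)
        · simp only [hs, Finset.coe_image, Set.mem_image, Finset.coe_range, Set.mem_Iio] at hm
          obtain ⟨i, hi, rfl⟩ := hm
          exact ⟨i, by simp only [hg]; rw [if_pos (by omega)]⟩
        · rw [← range_enum A hA] at hm
          obtain ⟨k, rfl⟩ := hm

          refine ⟨k + (n + 1), ?_⟩
          simp only [hg]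
          rw [if_neg (by omega)]
          have hk : k + (n + 1) - (n + 1) = k := by omega
          rw [hk]
    have hXg : InfSub := ⟨g, hgmono⟩
    have hbadg : Bad φ (Set.range g) (infinite_range ⟨g, hgmono⟩) := by
      unfold Bad
      rw [enum_range ⟨g, hgmono⟩]
      have hag : ∀ i ≤ n, g i = X.1 i := by
        intro i hi; simp only [hg]; rw [if_pos hi]
      have e1 : φ ⟨g, hgmono⟩ = φ X := h1 _ (fun i hi => hag i (le_trans hi (le_max_left _ _)))
      have e2 : φ (shiftS ⟨g, hgmono⟩) = φ (shiftS X) :=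
        h2 _ (fun i hi => hag i (le_trans hi (le_max_right _ _)))
      rw [e1, e2]
      exact hbad
    exact Bad_congr (φ := φ) hrange hbadg

end GPaux

namespace GPaux

variable {φ : InfSub → ℕ}

lemma diag {Y : Set ℕ} (hY : Y.Infinite) {s : Finset ℕ} (hrej : Rejects φ Y s) :
    ∃ Z, Z ⊆ Y ∧ Z.Infinite ∧ ∀ n ∈ Z, Rejects φ Z (insert n s) := by
  by_contra hcon
  push_neg at hcon
  -- every infinite subset Z of Y has an n ∈ Z and an infinite W ⊆ Z, above n,
  -- accepting `insert n s`
  have step : ∀ Z : {Z : Set ℕ // Z ⊆ Y ∧ Z.Infinite},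
      ∃ p : ℕ × {Z : Set ℕ // Z ⊆ Y ∧ Z.Infinite},
        p.1 ∈ Z.1 ∧ p.2.1 ⊆ Z.1 ∧ (∀ k ∈ p.2.1, p.1 < k) ∧
          Accepts φ p.2.1 (insert p.1 s) := by
    rintro ⟨Z, hZY, hZ⟩
    obtain ⟨n, hnZ, hnrej⟩ := hcon Z hZY hZ
    rw [Rejects] at hnrej
    push_neg at hnrej
    obtain ⟨W, hWZ, hW, hWacc⟩ := hnrej
    refine ⟨⟨n, ⟨W ∩ Set.Ioi n, (Set.inter_subset_left.trans hWZ).trans hZY, ?_⟩⟩,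
      hnZ, Set.inter_subset_left.trans hWZ, fun k hk => hk.2, hWacc.mono Set.inter_subset_left⟩
    have : W \ Set.Iic n ⊆ W ∩ Set.Ioi n := by
      intro k hk; exact ⟨hk.1, by simpa using hk.2⟩
    exact (hW.diff (Set.finite_Iic n)).mono this
  choose pick h1 h2 h3 h4 using step
  set st : ℕ → {Z : Set ℕ // Z ⊆ Y ∧ Z.Infinite} :=
    fun i => Nat.rec ⟨Y, subset_rfl, hY⟩ (fun _ Z => (pick Z).2) i with hst
  have hstsucc : ∀ i, st (i + 1) = (pick (st i)).2 := fun i => rfl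
  set nn : ℕ → ℕ := fun i => (pick (st i)).1 with hnn
  have hmem : ∀ i, nn i ∈ (st i).1 := fun i => h1 (st i)
  have hsub : ∀ i, (st (i + 1)).1 ⊆ (st i).1 := fun i => h2 (st i)
  have hlt : ∀ i, ∀ k ∈ (st (i + 1)).1, nn i < k := fun i => h3 (st i)
  have hacc : ∀ i, Accepts φ (st (i + 1)).1 (insert (nn i) s) := fun i => h4 (st i)
  have hchain : ∀ i j, i ≤ j → (st j).1 ⊆ (st i).1 := by
    intro i j hij
    induction j with
    | zero => simp_all
    | succ j ih =>
      rcases Nat.eq_or_lt_of_le hij with rfl | h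
      · rfl
      · exact (hsub j).trans (ih (by omega))
  have hnnlt : ∀ i j, i < j → nn i < nn j := by
    intro i j hij
    exact hlt i (nn j) (hchain (i + 1) j hij (hmem j))
  have hnninj : Function.Injective nn := by
    intro i j hij
    rcases lt_trichotomy i j with h | h | h
    · exact absurd hij (hnnlt i j h).ne
    · exact h
    · exact absurd hij.symm (hnnlt j i h).ne
  -- the diagonal set
  set W : Set ℕ := Set.range nn with hWdef
  have hWY : W ⊆ Y := by
    rintro _ ⟨i, rfl⟩
    exact (st i).2.1 (hmem i)
  have hWinf : W.Infinite := Set.infinite_range_of_injective hnninj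
  refine hrej W hWY hWinf ?_
  intro A hAW habove hA
  -- A has a least element nn i0
  obtain ⟨a0, ha0⟩ := hA.nonempty
  obtain ⟨i0pre, hi0pre⟩ := hAW ha0
  have hEx : ∃ i, nn i ∈ A := ⟨i0pre, hi0pre ▸ ha0⟩
  classical
  set i0 := Nat.find hEx with hi0
  have hi0mem : nn i0 ∈ A := Nat.find_spec hEx
  have hminlt : ∀ k ∈ A, k ≠ nn i0 → nn i0 < k := by
    intro k hk hkne
    obtain ⟨j, rfl⟩ := hAW hk
    rcases lt_trichotomy j i0 with h | h | h
    · exact absurd hk (by simpa using Nat.find_min hEx h)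
    · exact absurd rfl (h ▸ hkne)
    · exact hnnlt i0 j h
  have hdiffsub : A \ {nn i0} ⊆ (st (i0 + 1)).1 := by
    rintro k ⟨hk, hkne⟩
    obtain ⟨j, rfl⟩ := hAW hk
    have : i0 < j := by
      rcases lt_trichotomy j i0 with h | h | h
      · exact absurd hk (by simpa using Nat.find_min hEx h)
      · exact absurd (congrArg nn h) (by simpa using hkne)
      · exact h
    exact hchain (i0 + 1) j this (hmem j)
  have hdiffinf : (A \ {nn i0}).Infinite := hA.diff (Set.finite_singleton _)
  have habove' : ∀ m ∈ insert (nn i0) s, ∀ k ∈ A \ {nn i0}, m < k := by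
    intro m hm k hk
    rcases Finset.mem_insert.1 hm with rfl | hm
    · exact hminlt k hk.1 (by simpa using hk.2)
    · exact habove m hm k hk.1
  have hbad := hacc i0 (A \ {nn i0}) hdiffsub habove' hdiffinf
  have hsetEq : (↑(insert (nn i0) s) : Set ℕ) ∪ (A \ {nn i0}) = ↑s ∪ A := by
    ext m
    simp only [Finset.coe_insert, Set.mem_union, Set.mem_insert_iff, Set.mem_diff,
      Set.mem_singleton_iff, Finset.mem_coe]
    constructor
    · rintro ((rfl | hm) | ⟨hm, _⟩)
      · exact Or.inr hi0mem
      · exact Or.inl hm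
      · exact Or.inr hm
    · rintro (hm | hm)
      · exact Or.inl (Or.inr hm)
      · by_cases hme : m = nn i0
        · exact Or.inl (Or.inl hme)
        · exact Or.inr ⟨hm, hme⟩
  exact Bad_congr (φ := φ) hsetEq hbad

end GPaux

namespace GPaux

variable {φ : InfSub → ℕ}

lemma multiStep {Y : Set ℕ} (hY : Y.Infinite) (S : Finset (Finset ℕ))
    (h : ∀ s ∈ S, Rejects φ Y s) :
    ∃ Y', Y' ⊆ Y ∧ Y'.Infinite ∧ ∀ s ∈ S, ∀ n ∈ Y', Rejects φ Y' (insert n s) := by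
  classical
  induction S using Finset.induction_on generalizing Y with
  | empty => exact ⟨Y, subset_rfl, hY, by simp⟩
  | @insert s0 S hs0 ih =>
    obtain ⟨Y1, hY1Y, hY1, hY1rej⟩ := ih hY (fun s hs => h s (Finset.mem_insert_of_mem hs))
    have hY1s0 : Rejects φ Y1 s0 := (h s0 (Finset.mem_insert_self _ _)).mono hY1Y
    obtain ⟨Y2, hY2Y1, hY2, hY2rej⟩ := diag hY1 hY1s0
    refine ⟨Y2, hY2Y1.trans hY1Y, hY2, ?_⟩
    intro s hs n hn
    rcases Finset.mem_insert.1 hs with rfl | hs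
    · exact hY2rej n hn
    · exact (hY1rej s hs n (hY2Y1 hn)).mono hY2Y1

structure FState (φ : InfSub → ℕ) where
  F : Finset ℕ
  Y : Set ℕ
  hY : Y.Infinite
  hFY : ∀ m ∈ F, ∀ k ∈ Y, m < k
  hrej : ∀ s ⊆ F, Rejects φ Y s

lemma fstate_step (st : FState φ) :
    ∃ st' : FState φ, ∃ y : ℕ, st'.Y ⊆ st.Y ∧ st'.F = insert y st.F ∧ y ∈ st.Y ∧
      ∀ k ∈ st'.Y, y < k := by
  classical
  obtain ⟨F, Y, hY, hFY, hrej⟩ := st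
  obtain ⟨Y', hY'Y, hY', hY'rej⟩ :=
    multiStep (φ := φ) hY F.powerset (fun s hs => hrej s (Finset.mem_powerset.1 hs))
  obtain ⟨y, hy⟩ := hY'.nonempty
  have hyY : y ∈ Y := hY'Y hy
  set Y'' : Set ℕ := Y' ∩ Set.Ioi y with hY''def
  have hY''sub : Y'' ⊆ Y' := Set.inter_subset_left
  have hY''inf : Y''.Infinite := by
    have : Y' \ Set.Iic y ⊆ Y'' := fun k hk => ⟨hk.1, by simpa using hk.2⟩
    exact ((hY'.diff (Set.finite_Iic y)).mono this)
  refine ⟨⟨insert y F, Y'', hY''inf, ?_, ?_⟩, y, hY''sub.trans hY'Y, rfl, hyY, fun k hk => hk.2⟩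
  · intro m hm k hk
    rcases Finset.mem_insert.1 hm with rfl | hm
    · exact hk.2
    · exact hFY m hm k (hY'Y (hY''sub hk))
  · intro s hs
    by_cases hys : y ∈ s
    · have hsF : s.erase y ⊆ F := by
        intro m hm
        have := hs (Finset.mem_of_mem_erase hm)
        rcases Finset.mem_insert.1 this with rfl | h
        · exact absurd rfl (Finset.ne_of_mem_erase hm)
        · exact h
      have := hY'rej (s.erase y) (Finset.mem_powerset.2 hsF) y hy
      rw [Finset.insert_erase hys] at this
      exact this.mono hY''sub
    · have hsF : s ⊆ F := by
        intro m hm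
        rcases Finset.mem_insert.1 (hs hm) with rfl | h
        · exact absurd hm hys
        · exact h
      exact (hrej s hsF).mono (hY''sub.trans hY'Y)

end GPaux

namespace GPaux

variable {φ : InfSub → ℕ}

lemma exists_rejecting_set (φ : InfSub → ℕ) :
    ∃ Z : Set ℕ, Z.Infinite ∧ ∀ s : Finset ℕ, ↑s ⊆ Z → Rejects φ Z s := by
  classical
  choose next y hYsub hF hyY hylt using fstate_step (φ := φ)
  set st0 : FState φ := ⟨∅, Set.univ, Set.infinite_univ,
    by simp, fun s hs => by
      rw [Finset.subset_empty.1 hs]; exact rejects_univ_empty⟩ with hst0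
  set st : ℕ → FState φ := fun i => Nat.rec st0 (fun _ s => next s) i with hstdef
  have hstsucc : ∀ i, st (i + 1) = next (st i) := fun i => rfl
  set ys : ℕ → ℕ := fun i => y (st i) with hys
  have hsub : ∀ i, (st (i + 1)).Y ⊆ (st i).Y := fun i => hYsub (st i)
  have hFs : ∀ i, (st (i + 1)).F = insert (ys i) (st i).F := fun i => hF (st i)
  have hymem : ∀ i, ys i ∈ (st i).Y := fun i => hyY (st i)
  have hyslt : ∀ i, ∀ k ∈ (st (i + 1)).Y, ys i < k := fun i => hylt (st i)
  have hchain : ∀ i j, i ≤ j → (st j).Y ⊆ (st i).Y := by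
    intro i j hij
    induction j with
    | zero => simp_all
    | succ j ih =>
      rcases Nat.eq_or_lt_of_le hij with rfl | h
      · rfl
      · exact (hsub j).trans (ih (by omega))
  have hyslt' : ∀ i j, i < j → ys i < ys j := fun i j hij =>
    hyslt i (ys j) (hchain (i + 1) j hij (hymem j))
  have hinj : Function.Injective ys := by
    intro i j hij
    rcases lt_trichotomy i j with h | h | h
    · exact absurd hij (hyslt' i j h).ne
    · exact h
    · exact absurd hij.symm (hyslt' j i h).ne
  have hFform : ∀ i, (st i).F = (Finset.range i).image ys := by
    intro i
    induction i with
    | zero => simp [hstdef, hst0]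
    | succ i ih =>
      rw [hFs i, ih, Finset.range_add_one, Finset.image_insert]
  refine ⟨Set.range ys, Set.infinite_range_of_injective hinj, ?_⟩
  intro s hs
  -- find a stage i with s ⊆ (st i).F
  have hidx : ∀ m ∈ s, ∃ j, ys j = m := fun m hm => hs hm
  choose idx hidx using hidx
  classical
  set i : ℕ := (s.attach.sup fun p => idx p.1 p.2) + 1 with hi_def
  have hi : ∀ m (hm : m ∈ s), idx m hm < i := by
    intro m hm
    have h2 : idx m hm ≤ s.attach.sup fun p => idx p.1 p.2 :=
      Finset.le_sup (f := fun p : {x // x ∈ s} => idx p.1 p.2) (Finset.mem_attach s ⟨m, hm⟩)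
    omega
  have hsF : s ⊆ (st i).F := by
    intro m hm
    rw [hFform i]
    exact Finset.mem_image.2 ⟨idx m hm, Finset.mem_range.2 (hi m hm), hidx m hm⟩
  have hrejYi : Rejects φ (st i).Y s := (st i).hrej s hsF
  -- now transfer to Z
  intro W hWZ hW hWacc
  set W' : Set ℕ := W ∩ (st i).Y with hW'def
  have hW'inf : W'.Infinite := by
    have hsub2 : W \ (ys '' Set.Iio i) ⊆ W' := by
      rintro k ⟨hkW, hknot⟩
      refine ⟨hkW, ?_⟩
      obtain ⟨j, rfl⟩ := hWZ hkW
      have hj : ¬ j < i := fun h => hknot ⟨j, h, rfl⟩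
      exact hchain i j (by omega) (hymem j)
    exact (hW.diff ((Set.finite_Iio i).image ys)).mono hsub2
  exact hrejYi W' Set.inter_subset_right hW'inf (hWacc.mono Set.inter_subset_left)

end GPaux


/-- if `φ` is a continuous homomorphism from `D_S` to `(ω, P)`
with `P` irreflexive, then there is `Y ∈ [ω]^ω` such that `φ(X) < φ(S(X))`
for all infinite `X ⊆ Y`. -/
theorem continuous_hom_strict_increase (P : ℕ → ℕ → Prop) (hP : Irreflexive P)
    (φ : InfSub → ℕ) (hφc : Continuous φ) (hφ : ∀ X : InfSub, P (φ X) (φ (shiftS X))) :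
    ∃ Y : InfSub, ∀ X : InfSub, Set.range X.1 ⊆ Set.range Y.1 → φ X < φ (shiftS X) := by
  obtain ⟨Z, hZ, hZrej⟩ := GPaux.exists_rejecting_set φ
  refine ⟨GPaux.enum Z hZ, ?_⟩
  intro X hX
  rw [GPaux.range_enum] at hX
  by_contra hlt
  have hne : φ X ≠ φ (shiftS X) := fun h => hP _ (h ▸ hφ X)
  have hbad : φ (shiftS X) < φ X := by omega
  obtain ⟨s, hsZ, hacc⟩ := GPaux.accepts_of_bad hφc X hX hbad
  exact hZrej s hsZ Z subset_rfl hZ hacc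
end

section
/- The usual order ≤ on ω is a better-binary-relation: for every continuous map φ:[ω]^ω→ω (ω discrete), there exists X∈[ω]^ω with φ(X) ≤ φ(S(X)). -/
/-- the usual order on ω is a better-binary-relation: every
continuous `φ : [ω]^ω → ω` (ω discrete) admits `X` with `φ(X) ≤ φ(S(X))`. -/
theorem nat_le_better (φ : InfSub → ℕ) (hφ : Continuous φ) :
    ∃ X : InfSub, φ X ≤ φ (shiftS X) := by
  by_contra h
  push_neg at h
  set X0 : InfSub := ⟨id, strictMono_id⟩ with hX0
  have key : ∀ n, φ (shiftS^[n] X0) + n ≤ φ X0 := by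
    intro n
    induction n with
    | zero => simp
    | succ n ih =>
      have hlt : φ (shiftS^[n + 1] X0) < φ (shiftS^[n] X0) := by
        rw [Function.iterate_succ_apply']
        exact h _
      omega
  have := key (φ X0 + 1)
  omega
end
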